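/- arXiv:2104.02148 — 6 statements merged into one kernel-verified Lean document; each statement's English description precedes it below -/
import Mathlib

section
/- Let F be a finite nonempty family of convex sets in ℝ³ such that any two members of F intersect. Then there exists a two-dimensional affine plane in ℝ³ that intersects every member of F. -/
open scoped RealInnerProductSpace

/-- A finite nonempty family of pairwise intersecting convex sets in ℝ³
admits a two-dimensional plane (given by a nonzero normal vector `u` and level `c`)
meeting every member. -/
theorem pairwise_intersecting_convex_plane_transversal
    (F : Finset (Set (EuclideanSpace ℝ (Fin 3))))
    (hne : F.Nonempty)
    (hconv : ∀ A ∈ F, Convex ℝ A)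
    (hpair : ∀ A ∈ F, ∀ B ∈ F, (A ∩ B).Nonempty) :
    ∃ (u : EuclideanSpace ℝ (Fin 3)) (c : ℝ), u ≠ 0 ∧
      ∀ A ∈ F, ({x : EuclideanSpace ℝ (Fin 3) | ⟪x, u⟫ = c} ∩ A).Nonempty := by
  classical
  set u : EuclideanSpace ℝ (Fin 3) := EuclideanSpace.single 0 1 with hu
  have hu0 : u ≠ 0 := by
    intro h
    have := congrFun (congrArg (fun v : EuclideanSpace ℝ (Fin 3) => (v : Fin 3 → ℝ)) h) 0
    simp [hu, EuclideanSpace.single_apply] at this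
  set f : EuclideanSpace ℝ (Fin 3) → ℝ := fun x => ⟪x, u⟫ with hf
  have hflin : IsLinearMap ℝ f := by
    constructor
    · intro x y; simp [hf, inner_add_left, add_mul, Finset.sum_add_distrib]
    · intro c x; simp [hf, Finset.mul_sum, mul_assoc, real_inner_smul_left]
  -- projections
  have hconv' : ∀ X ∈ F, Convex ℝ (f '' X) := fun X hX =>
    (hconv X hX).is_linear_image hflin
  have h_inter : ∀ I ⊆ F, I.card ≤ Module.finrank ℝ ℝ + 1 →
      (⋂ X ∈ I, f '' X).Nonempty := by
    intro I hIF hcard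
    rcases I.eq_empty_or_nonempty with rfl | ⟨a, ha⟩
    · simp
    · by_cases hb : ∃ b ∈ I, b ≠ a
      · obtain ⟨b, hb, hba⟩ := hb
        have hsub : I ⊆ {a, b} := by
          intro c hc
          by_contra hcn
          simp only [Finset.mem_insert, Finset.mem_singleton, not_or] at hcn
          have : ({a, b, c} : Finset _) ⊆ I := by
            intro x hx
            simp only [Finset.mem_insert, Finset.mem_singleton] at hx
            rcases hx with rfl | rfl | rfl <;> assumption
          have h3 : ({a, b, c} : Finset (Set (EuclideanSpace ℝ (Fin 3)))).card = 3 := by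
            rw [Finset.card_insert_of_notMem (by simp [hba.symm, Ne.symm hcn.1]),
                Finset.card_insert_of_notMem (by simp [Ne.symm hcn.2])]
            simp
          have := Finset.card_le_card this
          simp [h3] at this
          simp [Module.finrank_self] at hcard
          omega
        obtain ⟨x, hxa, hxb⟩ := hpair a (hIF ha) b (hIF hb)
        refine ⟨f x, ?_⟩
        simp only [Set.mem_iInter]
        intro X hX
        rcases Finset.mem_insert.mp (hsub hX) with rfl | h
        · exact ⟨x, hxa, rfl⟩
        · rw [Finset.mem_singleton] at h; subst h; exact ⟨x, hxb, rfl⟩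
      · push_neg at hb
        have hsub : I ⊆ {a} := fun c hc => Finset.mem_singleton.mpr (hb c hc)
        obtain ⟨x, hxa, -⟩ := hpair a (hIF ha) a (hIF ha)
        refine ⟨f x, ?_⟩
        simp only [Set.mem_iInter]
        intro X hX
        have := Finset.mem_singleton.mp (hsub hX); subst this
        exact ⟨x, hxa, rfl⟩
  obtain ⟨c, hc⟩ := Convex.helly_theorem' (𝕜 := ℝ) (s := F) hconv' h_inter
  refine ⟨u, c, hu0, ?_⟩
  intro A hA
  have : c ∈ f '' A := by
    simp only [Set.mem_iInter] at hc
    exact hc A hA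
  obtain ⟨x, hxA, hxc⟩ := this
  exact ⟨x, hxc, hxA⟩
end

section
/- Let K be a compact convex set in the plane of width exactly 1. Then there exists a set T of at most 12 points in the plane such that every closed slab S of width at least 1 satisfying S ∩ K ≠ ∅ and S \ K connected contains a point of T. -/
open scoped RealInnerProductSpace

/-- A closed slab in the plane of width `w`, given by a unit normal `u`. -/
def IsSlab (S : Set (EuclideanSpace ℝ (Fin 2))) (w : ℝ) : Prop :=
  ∃ (u : EuclideanSpace ℝ (Fin 2)) (a : ℝ), ‖u‖ = 1 ∧
    S = {x : EuclideanSpace ℝ (Fin 2) | a ≤ ⟪x, u⟫ ∧ ⟪x, u⟫ ≤ a + w}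

/-- Rotation by 90 degrees in the plane. -/
noncomputable def TwelveAuxJ (u : EuclideanSpace ℝ (Fin 2)) : EuclideanSpace ℝ (Fin 2) :=
  (EuclideanSpace.equiv (Fin 2) ℝ).symm ![-(u 1), u 0]

namespace TwelveAux

noncomputable abbrev J := TwelveAuxJ

lemma rep (u : EuclideanSpace ℝ (Fin 2)) (hu : ‖u‖ = 1) (x : EuclideanSpace ℝ (Fin 2)) :
    x = ⟪x, u⟫ • u + ⟪x, J u⟫ • J u := by
  have h : u 0 ^ 2 + u 1 ^ 2 = 1 := by
    have := hu
    rw [EuclideanSpace.norm_eq, Real.sqrt_eq_one] at this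
    simpa [Fin.sum_univ_two, sq_abs] using this
  ext i
  fin_cases i
  · simp [J, TwelveAuxJ, PiLp.inner_apply, Fin.sum_univ_two, PiLp.add_apply, PiLp.smul_apply,
      smul_eq_mul]
    linear_combination (-(x 0)) * h
  · simp [J, TwelveAuxJ, PiLp.inner_apply, Fin.sum_univ_two, PiLp.add_apply, PiLp.smul_apply,
      smul_eq_mul]
    linear_combination (-(x 1)) * h

lemma inner_J_self (u : EuclideanSpace ℝ (Fin 2)) : ⟪J u, u⟫ = 0 := by
  simp [J, TwelveAuxJ, PiLp.inner_apply, Fin.sum_univ_two]; ring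

lemma inner_J_J (u v : EuclideanSpace ℝ (Fin 2)) : ⟪J u, J v⟫ = ⟪u, v⟫ := by
  simp [J, TwelveAuxJ, PiLp.inner_apply, Fin.sum_univ_two]; ring

lemma norm_J (u : EuclideanSpace ℝ (Fin 2)) : ‖J u‖ = ‖u‖ := by
  rw [EuclideanSpace.norm_eq, EuclideanSpace.norm_eq]
  congr 1
  simp [J, TwelveAuxJ, Fin.sum_univ_two]; ring

lemma ker_J (d x : EuclideanSpace ℝ (Fin 2)) (hd : d ≠ 0) (h : ⟪x, J d⟫ = 0) :
    ∃ t : ℝ, x = t • d := by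
  have h' : x 0 * (-(d 1)) + x 1 * d 0 = 0 := by
    simp [J, TwelveAuxJ, PiLp.inner_apply, Fin.sum_univ_two] at h ⊢; linarith
  have hd' : d 0 ≠ 0 ∨ d 1 ≠ 0 := by
    by_contra hc
    push_neg at hc
    apply hd
    ext i; fin_cases i <;> simp [hc.1, hc.2]
  rcases hd' with h0 | h1
  · refine ⟨x 0 / d 0, ?_⟩
    ext i; fin_cases i <;> simp [PiLp.smul_apply, smul_eq_mul] <;> field_simp <;> nlinarith [h']
  · refine ⟨x 1 / d 1, ?_⟩
    ext i; fin_cases i <;> simp [PiLp.smul_apply, smul_eq_mul] <;> field_simp <;> nlinarith [h']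

lemma not_preconnected_of_crossing (K : Set (EuclideanSpace ℝ (Fin 2)))
    (hKconv : Convex ℝ K) (hKb : Bornology.IsBounded K)
    (u : EuclideanSpace ℝ (Fin 2)) (hu : ‖u‖ = 1) (a w : ℝ) (hw : 0 ≤ w)
    (k₁ : EuclideanSpace ℝ (Fin 2)) (hk₁ : k₁ ∈ K) (h1 : ⟪k₁, u⟫ < a)
    (k₂ : EuclideanSpace ℝ (Fin 2)) (hk₂ : k₂ ∈ K) (h2 : a + w < ⟪k₂, u⟫) :
    ¬ IsPreconnected ({x : EuclideanSpace ℝ (Fin 2) | a ≤ ⟪x, u⟫ ∧ ⟪x, u⟫ ≤ a + w} \ K) := by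
  intro hconn
  set d : EuclideanSpace ℝ (Fin 2) := k₂ - k₁ with hd_def
  have hdu : (0:ℝ) < ⟪d, u⟫ := by
    have : ⟪d, u⟫ = ⟪k₂, u⟫ - ⟪k₁, u⟫ := by rw [hd_def, inner_sub_left]
    rw [this]; linarith
  have hdne : d ≠ 0 := by
    intro h
    rw [h] at hdu
    simp at hdu
  set n : EuclideanSpace ℝ (Fin 2) := J d with hn_def
  set φ : EuclideanSpace ℝ (Fin 2) → ℝ := fun x => ⟪x - k₁, n⟫ with hφ_def
  have hφcont : Continuous φ := by
    exact Continuous.inner (continuous_id.sub continuous_const) continuous_const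
  set U : Set (EuclideanSpace ℝ (Fin 2)) := φ ⁻¹' (Set.Ioi 0) with hU_def
  set V : Set (EuclideanSpace ℝ (Fin 2)) := φ ⁻¹' (Set.Iio 0) with hV_def
  have hUopen : IsOpen U := isOpen_Ioi.preimage hφcont
  have hVopen : IsOpen V := isOpen_Iio.preimage hφcont
  have hcover : ({x : EuclideanSpace ℝ (Fin 2) | a ≤ ⟪x, u⟫ ∧ ⟪x, u⟫ ≤ a + w} \ K) ⊆ U ∪ V := by
    rintro x ⟨⟨hxa, hxw⟩, hxK⟩
    rcases lt_trichotomy (φ x) 0 with h | h | h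
    · exact Or.inr h
    · exfalso
      obtain ⟨t, ht⟩ := ker_J d (x - k₁) hdne (by simpa [hφ_def, hn_def] using h)
      have hx_eq : x = k₁ + t • d := by
        rw [← ht]; abel
      have hproj : ⟪x, u⟫ = ⟪k₁, u⟫ + t * ⟪d, u⟫ := by
        rw [hx_eq, inner_add_left, real_inner_smul_left]
      have ht0 : 0 < t := by
        by_contra hc
        push_neg at hc
        have : t * ⟪d, u⟫ ≤ 0 := mul_nonpos_of_nonpos_of_nonneg hc hdu.le
        nlinarith
      have ht1 : t < 1 := by
        by_contra hc
        push_neg at hc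
        have : ⟪d, u⟫ ≤ t * ⟪d, u⟫ := le_mul_of_one_le_left hdu.le hc
        have hd2 : ⟪d, u⟫ = ⟪k₂, u⟫ - ⟪k₁, u⟫ := by rw [hd_def, inner_sub_left]
        nlinarith
      apply hxK
      have hmem : (1 - t) • k₁ + t • k₂ ∈ K :=
        hKconv hk₁ hk₂ (by linarith) (by linarith) (by ring)
      have : x = (1 - t) • k₁ + t • k₂ := by
        rw [hx_eq, hd_def]
        module
      rwa [this]
    · exact Or.inl h
  obtain ⟨ρ, hρ⟩ := hKb.subset_closedBall 0
  have key : ∀ R : ℝ, ⟪a • u + R • J u, u⟫ = a := by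
    intro R
    rw [inner_add_left, real_inner_smul_left, real_inner_smul_left, real_inner_self_eq_norm_sq,
      hu, inner_J_self]
    ring
  have hJuU : ⟪J u, n⟫ = ⟪u, d⟫ := by rw [hn_def, inner_J_J]
  have hud : (0:ℝ) < ⟪u, d⟫ := by rwa [real_inner_comm]
  set C : ℝ := ⟪a • u - k₁, n⟫ with hC_def
  have hφR : ∀ R : ℝ, φ (a • u + R • J u) = C + R * ⟪u, d⟫ := by
    intro R
    simp only [hφ_def, hC_def]
    rw [show a • u + R • J u - k₁ = (a • u - k₁) + R • J u by abel, inner_add_left,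
      real_inner_smul_left, hJuU]
  have hnorm : ∀ R : ℝ, |R| - |a| ≤ ‖a • u + R • J u‖ := by
    intro R
    have h1 : ‖R • J u‖ ≤ ‖a • u + R • J u‖ + ‖a • u‖ := by
      have := norm_sub_le (a • u + R • J u) (a • u)
      simpa [add_sub_cancel_left] using this
    have h2 : ‖R • J u‖ = |R| := by rw [norm_smul, norm_J, hu, Real.norm_eq_abs, mul_one]
    have h3 : ‖a • u‖ = |a| := by rw [norm_smul, hu, Real.norm_eq_abs, mul_one]
    linarith [h1, h2.symm.le, h3.le]
  have hρ' : K ⊆ Metric.closedBall 0 |ρ| :=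
    hρ.trans (Metric.closedBall_subset_closedBall (le_abs_self ρ))
  have hmemS : ∀ R : ℝ, |R| > |ρ| + |a| →
      a • u + R • J u ∈ ({x : EuclideanSpace ℝ (Fin 2) | a ≤ ⟪x, u⟫ ∧ ⟪x, u⟫ ≤ a + w} \ K) := by
    intro R hR
    constructor
    · constructor
      · exact le_of_eq (key R).symm
      · rw [key R]; linarith
    · intro hmem
      have := hρ' hmem
      rw [Metric.mem_closedBall, dist_zero_right] at this
      have := hnorm R
      linarith
  set Rp : ℝ := max (|ρ| + |a| + 1) ((1 + |C|) / ⟪u, d⟫) with hRp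
  have hRpos : 0 < Rp := lt_of_lt_of_le (by positivity) (le_max_left _ _)
  have hRgt : |ρ| + |a| < Rp := lt_of_lt_of_le (by linarith) (le_max_left _ _)
  have hφpos : 0 < φ (a • u + Rp • J u) := by
    rw [hφR]
    have h1 : (1 + |C|) / ⟪u, d⟫ ≤ Rp := le_max_right _ _
    have h2 : (1 + |C|) ≤ Rp * ⟪u, d⟫ := by
      rw [div_le_iff₀ hud] at h1; linarith
    have := neg_abs_le C
    linarith
  have hφneg : φ (a • u + (-Rp) • J u) < 0 := by
    rw [hφR]
    have h1 : (1 + |C|) / ⟪u, d⟫ ≤ Rp := le_max_right _ _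
    have h2 : (1 + |C|) ≤ Rp * ⟪u, d⟫ := by
      rw [div_le_iff₀ hud] at h1; linarith
    have := le_abs_self C
    nlinarith
  have hmemP := hmemS Rp (by rwa [abs_of_pos hRpos])
  have hmemN := hmemS (-Rp) (by rwa [abs_neg, abs_of_pos hRpos])
  obtain ⟨z, hz⟩ := hconn U V hUopen hVopen hcover
    ⟨a • u + Rp • J u, hmemP, hφpos⟩
    ⟨a • u + (-Rp) • J u, hmemN, hφneg⟩
  have hzU : z ∈ U := hz.2.1
  have hzV : z ∈ V := hz.2.2
  have h01 : 0 < φ z := hzU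
  have h02 : φ z < 0 := hzV
  linarith

lemma core (K : Set (EuclideanSpace ℝ (Fin 2))) (u₀ pa pb pM u : EuclideanSpace ℝ (Fin 2))
    (a₀ a w : ℝ)
    (hu₀ : ‖u₀‖ = 1) (hu : ‖u‖ = 1)
    (hK₀ : ∀ x ∈ K, a₀ ≤ ⟪x, u₀⟫ ∧ ⟪x, u₀⟫ ≤ a₀ + 1)
    (hpaK : pa ∈ K) (hpbK : pb ∈ K)
    (hAle : ∀ x ∈ K, ⟪pa, J u₀⟫ ≤ ⟪x, J u₀⟫)
    (hBle : ∀ x ∈ K, ⟪x, J u₀⟫ ≤ ⟪pb, J u₀⟫)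
    (hMK : pM ∈ K) (hM : ∀ x ∈ K, ⟪x, u⟫ ≤ ⟪pM, u⟫)
    (hw : 1 ≤ w) (ha : a ≤ ⟪pM, u⟫) (haw : ⟪pM, u⟫ ≤ a + w) :
    ∃ t ∈ ({a₀ • u₀ + ⟪pa, J u₀⟫ • J u₀, a₀ • u₀ + ⟪pb, J u₀⟫ • J u₀,
            (a₀+1) • u₀ + ⟪pa, J u₀⟫ • J u₀, (a₀+1) • u₀ + ⟪pb, J u₀⟫ • J u₀,
            pa, pb} : Set (EuclideanSpace ℝ (Fin 2))),
      a ≤ ⟪t, u⟫ ∧ ⟪t, u⟫ ≤ a + w := by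
  obtain ⟨z, hzK, hzmax, hzpab⟩ : ∃ z, z ∈ K ∧
      (∀ x ∈ K, ⟪x, J u₀⟫ * ⟪J u₀, u⟫ ≤ ⟪z, J u₀⟫ * ⟪J u₀, u⟫) ∧ (z = pa ∨ z = pb) := by
    rcases le_or_gt 0 ⟪J u₀, u⟫ with hQ | hQ
    · exact ⟨pb, hpbK, fun x hx => mul_le_mul_of_nonneg_right (hBle x hx) hQ, Or.inr rfl⟩
    · exact ⟨pa, hpaK, fun x hx => mul_le_mul_of_nonpos_right (hAle x hx) hQ.le, Or.inl rfl⟩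
  obtain ⟨r, hr1, hr2, hrmax, hrd⟩ : ∃ r, a₀ ≤ r ∧ r ≤ a₀ + 1 ∧
      (∀ α, a₀ ≤ α → α ≤ a₀ + 1 → α * ⟪u₀, u⟫ ≤ r * ⟪u₀, u⟫) ∧ (r = a₀ ∨ r = a₀ + 1) := by
    rcases le_or_gt 0 ⟪u₀, u⟫ with hP | hP
    · exact ⟨a₀ + 1, by linarith, le_refl _,
        fun α h1 h2 => mul_le_mul_of_nonneg_right h2 hP, Or.inr rfl⟩
    · exact ⟨a₀, le_refl _, by linarith,
        fun α h1 h2 => mul_le_mul_of_nonpos_right h1 hP.le, Or.inl rfl⟩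
  obtain ⟨α, β, hzrep, hα1, hα2, hβ⟩ : ∃ α β, z = α • u₀ + β • J u₀ ∧
      a₀ ≤ α ∧ α ≤ a₀ + 1 ∧ β = ⟪z, J u₀⟫ :=
    ⟨⟪z, u₀⟫, ⟪z, J u₀⟫, rep u₀ hu₀ z, (hK₀ z hzK).1, (hK₀ z hzK).2, rfl⟩
  set c : EuclideanSpace ℝ (Fin 2) := r • u₀ + β • J u₀ with hc
  have hcu : ⟪c, u⟫ = r * ⟪u₀, u⟫ + β * ⟪J u₀, u⟫ := by
    rw [hc, inner_add_left, real_inner_smul_left, real_inner_smul_left]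
  have hxu : ∀ x : EuclideanSpace ℝ (Fin 2),
      ⟪x, u⟫ = ⟪x, u₀⟫ * ⟪u₀, u⟫ + ⟪x, J u₀⟫ * ⟪J u₀, u⟫ := by
    intro x
    conv_lhs => rw [rep u₀ hu₀ x]
    rw [inner_add_left, real_inner_smul_left, real_inner_smul_left]
  have hv2 : ⟪pM, u⟫ ≤ ⟪c, u⟫ := by
    rw [hxu pM, hcu]
    have h1 := hrmax ⟪pM, u₀⟫ (hK₀ pM hMK).1 (hK₀ pM hMK).2
    have h2 := hzmax pM hMK
    rw [← hβ] at h2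
    linarith
  have hcmem : c ∈ ({a₀ • u₀ + ⟪pa, J u₀⟫ • J u₀, a₀ • u₀ + ⟪pb, J u₀⟫ • J u₀,
            (a₀+1) • u₀ + ⟪pa, J u₀⟫ • J u₀, (a₀+1) • u₀ + ⟪pb, J u₀⟫ • J u₀,
            pa, pb} : Set (EuclideanSpace ℝ (Fin 2))) := by
    rcases hrd with rfl | rfl <;> rcases hzpab with h | h <;> rw [hc, hβ, h] <;> simp
  have hzmem : z ∈ ({a₀ • u₀ + ⟪pa, J u₀⟫ • J u₀, a₀ • u₀ + ⟪pb, J u₀⟫ • J u₀,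
            (a₀+1) • u₀ + ⟪pa, J u₀⟫ • J u₀, (a₀+1) • u₀ + ⟪pb, J u₀⟫ • J u₀,
            pa, pb} : Set (EuclideanSpace ℝ (Fin 2))) := by
    rcases hzpab with h | h <;> rw [h] <;> simp
  have hcz : ⟪c, u⟫ - ⟪z, u⟫ ≤ 1 := by
    have h8 : c - z = (r - α) • u₀ := by
      rw [hc, hzrep]; module
    have h9 : ‖c - z‖ ≤ 1 := by
      rw [h8, norm_smul, hu₀, mul_one, Real.norm_eq_abs, abs_le]
      constructor <;> linarith
    have h10 := real_inner_le_norm (c - z) u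
    rw [inner_sub_left, hu, mul_one] at h10
    linarith
  have hzle : ⟪z, u⟫ ≤ ⟪pM, u⟫ := hM z hzK
  rcases le_or_gt ⟪c, u⟫ (a + w) with h | h
  · exact ⟨c, hcmem, le_trans ha hv2, h⟩
  · exact ⟨z, hzmem, by linarith, by linarith⟩

end TwelveAux

open TwelveAux in
/-- For a compact convex planar set `K` of width exactly 1, there are at most 12
points meeting every slab of width at least 1 that intersects but does not cross `K`. -/
theorem twelve_points_pierce_noncrossing_slabs
    (K : Set (EuclideanSpace ℝ (Fin 2)))
    (hKc : IsCompact K) (hKconv : Convex ℝ K) (hKne : K.Nonempty)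
    (hwidth₁ : ∃ S, IsSlab S 1 ∧ K ⊆ S)
    (hwidth₂ : ∀ S w, IsSlab S w → K ⊆ S → 1 ≤ w) :
    ∃ T : Finset (EuclideanSpace ℝ (Fin 2)), T.card ≤ 12 ∧
      ∀ S w, IsSlab S w → 1 ≤ w → (S ∩ K).Nonempty → IsPreconnected (S \ K) →
        ∃ t ∈ T, t ∈ S := by
  classical
  obtain ⟨S₀, ⟨u₀, a₀, hu₀, hS₀e⟩, hKS₀⟩ := hwidth₁
  rw [hS₀e] at hKS₀
  have hK₀ : ∀ x ∈ K, a₀ ≤ ⟪x, u₀⟫ ∧ ⟪x, u₀⟫ ≤ a₀ + 1 := fun x hx => hKS₀ hx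
  have hcont1 : Continuous fun x : EuclideanSpace ℝ (Fin 2) => ⟪x, J u₀⟫ :=
    Continuous.inner continuous_id continuous_const
  obtain ⟨pa, hpaK, hpa⟩ := hKc.exists_isMinOn hKne hcont1.continuousOn
  obtain ⟨pb, hpbK, hpb⟩ := hKc.exists_isMaxOn hKne hcont1.continuousOn
  have hAle : ∀ x ∈ K, ⟪pa, J u₀⟫ ≤ ⟪x, J u₀⟫ := fun x hx => hpa hx
  have hBle : ∀ x ∈ K, ⟪x, J u₀⟫ ≤ ⟪pb, J u₀⟫ := fun x hx => hpb hx
  refine ⟨[a₀ • u₀ + ⟪pa, J u₀⟫ • J u₀, a₀ • u₀ + ⟪pb, J u₀⟫ • J u₀,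
          (a₀+1) • u₀ + ⟪pa, J u₀⟫ • J u₀, (a₀+1) • u₀ + ⟪pb, J u₀⟫ • J u₀,
          pa, pb].toFinset, ?_, ?_⟩
  · exact le_trans (List.toFinset_card_le _) (by norm_num)
  · intro S w hS hw hSK hconn
    obtain ⟨u, a, hu, rfl⟩ := hS
    have hcontu : Continuous fun x : EuclideanSpace ℝ (Fin 2) => ⟪x, u⟫ :=
      Continuous.inner continuous_id continuous_const
    obtain ⟨pm, hpmK, hpm⟩ := hKc.exists_isMinOn hKne hcontu.continuousOn
    obtain ⟨pM, hpMK, hpM⟩ := hKc.exists_isMaxOn hKne hcontu.continuousOn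
    obtain ⟨x0, hx0S, hx0K⟩ := hSK
    have hx0S' : a ≤ ⟪x0, u⟫ ∧ ⟪x0, u⟫ ≤ a + w := hx0S
    have hdicho : a ≤ ⟪pm, u⟫ ∨ ⟪pM, u⟫ ≤ a + w := by
      by_contra hcon
      push_neg at hcon
      exact not_preconnected_of_crossing K hKconv hKc.isBounded u hu a w (by linarith)
        pm hpmK hcon.1 pM hpMK hcon.2 hconn
    rcases hdicho with hm | hM
    · have hnu : ‖-u‖ = 1 := by rw [norm_neg]; exact hu
      have hMneg : ∀ x ∈ K, ⟪x, -u⟫ ≤ ⟪pm, -u⟫ := by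
        intro x hx
        rw [inner_neg_right, inner_neg_right]
        exact neg_le_neg (hpm hx)
      have ha' : -(a+w) ≤ ⟪pm, -u⟫ := by
        rw [inner_neg_right]
        have : ⟪pm, u⟫ ≤ a + w := le_trans (hpm hx0K) hx0S'.2
        linarith
      have haw' : ⟪pm, -u⟫ ≤ -(a+w) + w := by
        rw [inner_neg_right]; linarith
      obtain ⟨t, htmem, ht1, ht2⟩ := core K u₀ pa pb pm (-u) a₀ (-(a+w)) w hu₀ hnu hK₀
        hpaK hpbK hAle hBle hpmK hMneg hw ha' haw'
      refine ⟨t, ?_, ?_⟩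
      · rw [List.mem_toFinset]
        simpa using htmem
      · rw [inner_neg_right] at ht1 ht2
        exact ⟨by linarith, by linarith⟩
    · have ha2 : a ≤ ⟪pM, u⟫ := le_trans hx0S'.1 (hpM hx0K)
      obtain ⟨t, htmem, ht1, ht2⟩ := core K u₀ pa pb pM u a₀ a w hu₀ hu hK₀ hpaK hpbK
        hAle hBle hpMK (fun x hx => hpM hx) hw ha2 hM
      refine ⟨t, ?_, ht1, ht2⟩
      rw [List.mem_toFinset]
      simpa using htmem
end

section
/- Let K be a compact convex set in the plane, and let S be a closed slab such that S ∩ K ≠ ∅ and S \ K is connected. If the width of S is at least the width of K, and S contains none of the four extreme points a, b, c, d of K (the two points where a minimal-width slab's middle line meets the boundary of K, and the two extreme points of K in the direction of that middle line), then S intersects the boundary of K in a subset of one of the four boundary arcs determined by a, b, c, d. -/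
open scoped RealInnerProductSpace

noncomputable section
namespace SlabArc

abbrev E2 := EuclideanSpace ℝ (Fin 2)

def rot (x : E2) : E2 := !₂[-x 1, x 0]

@[simp] lemma rot_apply0 (x : E2) : rot x 0 = -x 1 := rfl
@[simp] lemma rot_apply1 (x : E2) : rot x 1 = x 0 := rfl

lemma inner_e2 (x y : E2) : ⟪x, y⟫ = x 0 * y 0 + x 1 * y 1 := by
  simp [PiLp.inner_apply, Fin.sum_univ_two]; ring

lemma inner_rot_self (x : E2) : ⟪x, rot x⟫ = 0 := by
  simp [inner_e2]; ring

lemma inner_rot_rot (x y : E2) : ⟪rot x, rot y⟫ = ⟪x, y⟫ := by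
  simp [inner_e2]; ring

lemma norm_rot (x : E2) : ‖rot x‖ = ‖x‖ := by
  rw [← Real.sqrt_sq (norm_nonneg (rot x)), ← Real.sqrt_sq (norm_nonneg x)]
  rw [← real_inner_self_eq_norm_sq, ← real_inner_self_eq_norm_sq, inner_rot_rot]

lemma normsq_one {v : E2} (hv : ‖v‖ = 1) : v 0 * v 0 + v 1 * v 1 = 1 := by
  have := real_inner_self_eq_norm_sq v
  rw [hv] at this
  rw [inner_e2] at this
  nlinarith [this]

lemma decomp {v : E2} (hv : ‖v‖ = 1) (x : E2) :
    x = ⟪x, v⟫ • v + ⟪x, rot v⟫ • rot v := by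
  have h1 := normsq_one hv
  ext i
  have key : ∀ j : Fin 2, x j = (⟪x, v⟫ • v + ⟪x, rot v⟫ • rot v) j := by
    intro j
    rw [PiLp.add_apply, PiLp.smul_apply, PiLp.smul_apply, inner_e2, inner_e2]
    simp only [rot_apply0, rot_apply1, smul_eq_mul]
    fin_cases j <;> simp only [Fin.zero_eta, Fin.mk_one, rot_apply0, rot_apply1]
    · linear_combination (-(x 0)) * h1
    · linear_combination (-(x 1)) * h1
  exact key i

end SlabArc
-- redeclare section to continue
namespace SlabArc2
open SlabArc

lemma interp (gp gq σ : ℝ) (hd : gp < gq) :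
    (1 - (σ - gp) / (gq - gp)) * gp + (σ - gp) / (gq - gp) * gq = σ := by
  have h : gq - gp ≠ 0 := by linarith
  field_simp
  ring

lemma interp2 (lam gw gz : ℝ) (h : lam < 1) :
    (1 - lam) * ((gz - lam * gw) / (1 - lam)) + lam * gw = gz := by
  have h' : 1 - lam ≠ 0 := by linarith
  field_simp
  ring

lemma coords_eq {v : E2} (hv : ‖v‖ = 1) {x y : E2}
    (h1 : ⟪x, v⟫ = ⟪y, v⟫) (h2 : ⟪x, rot v⟫ = ⟪y, rot v⟫) : x = y := by
  rw [decomp hv x, decomp hv y, h1, h2]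

lemma inner_combo (p q : E2) (μ : ℝ) (v : E2) :
    ⟪(1 - μ) • p + μ • q, v⟫ = (1 - μ) * ⟪p, v⟫ + μ * ⟪q, v⟫ := by
  rw [inner_add_left, real_inner_smul_left, real_inner_smul_left]

lemma combo_mem {K : Set E2} (hK : Convex ℝ K) {v : E2} (hv : ‖v‖ = 1)
    {p q w z : E2} (hp : p ∈ K) (hq : q ∈ K) (hw : w ∈ K)
    {lam : ℝ} (hl0 : 0 ≤ lam) (hl1 : lam < 1)
    (hfpq : ⟪p, v⟫ = ⟪q, v⟫)
    (hfz : ⟪z, v⟫ = (1 - lam) * ⟪p, v⟫ + lam * ⟪w, v⟫)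
    (h1 : (1 - lam) * ⟪p, rot v⟫ ≤ ⟪z, rot v⟫ - lam * ⟪w, rot v⟫)
    (h2 : ⟪z, rot v⟫ - lam * ⟪w, rot v⟫ ≤ (1 - lam) * ⟪q, rot v⟫) :
    z ∈ K := by
  have hl1' : (0:ℝ) < 1 - lam := by linarith
  have hgpq : ⟪p, rot v⟫ ≤ ⟪q, rot v⟫ := by nlinarith
  -- define σ
  set σ : ℝ := (⟪z, rot v⟫ - lam * ⟪w, rot v⟫) / (1 - lam) with hσ
  have hσ1 : ⟪p, rot v⟫ ≤ σ := by
    rw [hσ, le_div_iff₀ hl1']; linarith [h1]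
  have hσ2 : σ ≤ ⟪q, rot v⟫ := by
    rw [hσ, div_le_iff₀ hl1']; linarith [h2]
  -- point m on [p,q] with g-coord σ
  obtain ⟨m, hm, hfm, hgm⟩ : ∃ m ∈ K, ⟪m, v⟫ = ⟪p, v⟫ ∧ ⟪m, rot v⟫ = σ := by
    rcases eq_or_lt_of_le hgpq with heq | hlt
    · refine ⟨p, hp, rfl, le_antisymm hσ1 ?_⟩
      rw [heq]; exact hσ2
    · set μ : ℝ := (σ - ⟪p, rot v⟫) / (⟪q, rot v⟫ - ⟪p, rot v⟫) with hμ
      have hd : (0:ℝ) < ⟪q, rot v⟫ - ⟪p, rot v⟫ := by linarith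
      have hμ0 : 0 ≤ μ := div_nonneg (by linarith) (le_of_lt hd)
      have hμ1 : μ ≤ 1 := by rw [hμ, div_le_one hd]; linarith
      refine ⟨(1 - μ) • p + μ • q, hK hp hq (by linarith) hμ0 (by ring), ?_, ?_⟩
      · rw [inner_combo, hfpq]; ring
      · rw [inner_combo, hμ]; exact interp _ _ _ hlt
  -- z = (1-lam) m + lam w
  have hz : z = (1 - lam) • m + lam • w := by
    apply coords_eq hv
    · rw [inner_combo, hfm, hfz]
    · rw [inner_combo, hgm, hσ]; exact (interp2 _ _ _ hl1).symm
  rw [hz]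
  exact hK hm hw (by linarith) hl0 (by ring)

lemma step_mem {K : Set E2} (hK : Convex ℝ K) {v : E2} (hv : ‖v‖ = 1)
    {p q w x z : E2} (hp : p ∈ K) (hq : q ∈ K) (hw : w ∈ K)
    (hfp : ⟪p, v⟫ = ⟪x, v⟫) (hfq : ⟪q, v⟫ = ⟪x, v⟫)
    {lam mm D : ℝ} (hmm0 : 0 < mm)
    (hl0 : 0 ≤ lam) (hl2 : lam ≤ 1/2) (hlD : lam * D ≤ mm / 8)
    (hfz : ⟪z, v⟫ = ⟪x, v⟫ + lam * (⟪w, v⟫ - ⟪x, v⟫))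
    (hds : |⟪z, rot v⟫ - ⟪x, rot v⟫| < mm / 4)
    (hD : |⟪w, rot v⟫ - ⟪x, rot v⟫| ≤ D)
    (hmm1 : mm ≤ ⟪x, rot v⟫ - ⟪p, rot v⟫)
    (hmm2 : mm ≤ ⟪q, rot v⟫ - ⟪x, rot v⟫) :
    z ∈ K := by
  have hl1 : lam < 1 := by linarith
  have habs1 := abs_lt.mp hds
  have habs2 := abs_le.mp hD
  have hlD' : lam * (⟪w, rot v⟫ - ⟪x, rot v⟫) ≤ mm / 8 ∧
      -(mm / 8) ≤ lam * (⟪w, rot v⟫ - ⟪x, rot v⟫) := by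
    constructor
    · calc lam * (⟪w, rot v⟫ - ⟪x, rot v⟫) ≤ lam * D := by
            apply mul_le_mul_of_nonneg_left _ hl0
            exact le_trans (le_abs_self _) hD
        _ ≤ mm / 8 := hlD
    · have : -(lam * D) ≤ lam * (⟪w, rot v⟫ - ⟪x, rot v⟫) := by
        rw [← mul_neg]
        apply mul_le_mul_of_nonneg_left _ hl0
        exact neg_le_of_abs_le hD
      linarith
  apply combo_mem hK hv hp hq hw hl0 hl1 (by rw [hfp, hfq])
  · rw [hfz, hfp]; ring
  · nlinarith [hlD'.1, hlD'.2, habs1.1, habs1.2, hmm1, hmm2, hl0, hl2, hmm0]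
  · nlinarith [hlD'.1, hlD'.2, habs1.1, habs1.2, hmm1, hmm2, hl0, hl2, hmm0]

set_option maxHeartbeats 800000 in
lemma quad_mem_interior {K : Set E2} (hK : Convex ℝ K) {v : E2} (hv : ‖v‖ = 1)
    {p q r y x : E2} (hp : p ∈ K) (hq : q ∈ K) (hr : r ∈ K) (hy : y ∈ K)
    (hfp : ⟪p, v⟫ = ⟪x, v⟫) (hfq : ⟪q, v⟫ = ⟪x, v⟫)
    (hgp : ⟪p, rot v⟫ < ⟪x, rot v⟫) (hgq : ⟪x, rot v⟫ < ⟪q, rot v⟫)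
    (hfy : ⟪y, v⟫ < ⟪x, v⟫) (hfr : ⟪x, v⟫ < ⟪r, v⟫) :
    x ∈ interior K := by
  set mm : ℝ := min (⟪x, rot v⟫ - ⟪p, rot v⟫) (⟪q, rot v⟫ - ⟪x, rot v⟫) with hmm
  have hmm0 : 0 < mm := lt_min (by linarith) (by linarith)
  set D : ℝ := |⟪r, rot v⟫ - ⟪x, rot v⟫| + |⟪y, rot v⟫ - ⟪x, rot v⟫| + 1 with hD
  have hD0 : 0 < D := by positivity
  set cp : ℝ := ⟪r, v⟫ - ⟪x, v⟫ with hcp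
  set cm : ℝ := ⟪x, v⟫ - ⟪y, v⟫ with hcm
  have hcp0 : 0 < cp := by rw [hcp]; linarith
  have hcm0 : 0 < cm := by rw [hcm]; linarith
  set c : ℝ := min cp cm with hc
  have hc0 : 0 < c := lt_min hcp0 hcm0
  have hccp : c ≤ cp := min_le_left _ _
  have hccm : c ≤ cm := min_le_right _ _
  set ε : ℝ := min (min (c/2) (mm/4)) (mm * c / (16 * D)) with hε
  have hε0 : 0 < ε :=
    lt_min (lt_min (by positivity) (by positivity)) (by positivity)
  have hεc2 : ε ≤ c/2 := le_trans (min_le_left _ _) (min_le_left _ _)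
  have hεmm : ε ≤ mm/4 := le_trans (min_le_left _ _) (min_le_right _ _)
  have hεD : ε * (16 * D) ≤ mm * c := by
    have h1 : ε ≤ mm * c / (16 * D) := min_le_right _ _
    rw [← le_div_iff₀ (by positivity)]
    exact h1
  have hmm1 : mm ≤ ⟪x, rot v⟫ - ⟪p, rot v⟫ := min_le_left _ _
  have hmm2 : mm ≤ ⟪q, rot v⟫ - ⟪x, rot v⟫ := min_le_right _ _
  have hDr : |⟪r, rot v⟫ - ⟪x, rot v⟫| ≤ D := by
    have h0 := abs_nonneg (⟪y, rot v⟫ - ⟪x, rot v⟫); rw [hD]; linarith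
  have hDy : |⟪y, rot v⟫ - ⟪x, rot v⟫| ≤ D := by
    have h0 := abs_nonneg (⟪r, rot v⟫ - ⟪x, rot v⟫); rw [hD]; linarith
  rw [mem_interior_iff_mem_nhds, Metric.mem_nhds_iff]
  refine ⟨ε, hε0, ?_⟩
  intro z hz
  rw [Metric.mem_ball, dist_eq_norm] at hz
  have hdt : |⟪z, v⟫ - ⟪x, v⟫| < ε := by
    rw [show ⟪z, v⟫ - ⟪x, v⟫ = ⟪z - x, v⟫ by rw [inner_sub_left]]
    calc |⟪z - x, v⟫| ≤ ‖z - x‖ * ‖v‖ := abs_real_inner_le_norm _ _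
      _ = ‖z - x‖ := by rw [hv, mul_one]
      _ < ε := hz
  have hds : |⟪z, rot v⟫ - ⟪x, rot v⟫| < ε := by
    rw [show ⟪z, rot v⟫ - ⟪x, rot v⟫ = ⟪z - x, rot v⟫ by rw [inner_sub_left]]
    calc |⟪z - x, rot v⟫| ≤ ‖z - x‖ * ‖rot v‖ := abs_real_inner_le_norm _ _
      _ = ‖z - x‖ := by rw [norm_rot, hv, mul_one]
      _ < ε := hz
  have hds' : |⟪z, rot v⟫ - ⟪x, rot v⟫| < mm / 4 := lt_of_lt_of_le hds hεmm
  have hdt' := abs_lt.mp hdt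
  rcases le_or_gt 0 (⟪z, v⟫ - ⟪x, v⟫) with hsgn | hsgn
  · -- use w = r
    set lam : ℝ := (⟪z, v⟫ - ⟪x, v⟫) / cp with hlam
    have hl0 : 0 ≤ lam := div_nonneg hsgn (le_of_lt hcp0)
    have hl2 : lam ≤ 1/2 := by
      rw [hlam, div_le_iff₀ hcp0]; nlinarith
    have hlD : lam * D ≤ mm / 8 := by
      rw [hlam, div_mul_eq_mul_div, div_le_iff₀ hcp0]
      nlinarith [mul_le_mul_of_nonneg_right (le_of_lt hdt'.2) hD0.le,
        mul_le_mul_of_nonneg_right hccp hmm0.le]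
    have hfz : ⟪z, v⟫ = ⟪x, v⟫ + lam * (⟪r, v⟫ - ⟪x, v⟫) := by
      have h : lam * cp = ⟪z, v⟫ - ⟪x, v⟫ := div_mul_cancel₀ _ (ne_of_gt hcp0)
      rw [hcp] at h; linear_combination -h
    exact step_mem hK hv hp hq hr hfp hfq hmm0 hl0 hl2 hlD hfz hds' hDr hmm1 hmm2
  · -- use w = y
    set lam : ℝ := (⟪x, v⟫ - ⟪z, v⟫) / cm with hlam
    have hl0 : 0 ≤ lam := div_nonneg (by linarith) (le_of_lt hcm0)
    have hl2 : lam ≤ 1/2 := by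
      rw [hlam, div_le_iff₀ hcm0]; nlinarith
    have hlD : lam * D ≤ mm / 8 := by
      rw [hlam, div_mul_eq_mul_div, div_le_iff₀ hcm0]
      nlinarith [mul_le_mul_of_nonneg_right (le_of_lt (show ⟪x, v⟫ - ⟪z, v⟫ < ε by linarith)) hD0.le,
        mul_le_mul_of_nonneg_right hccm hmm0.le]
    have hfz : ⟪z, v⟫ = ⟪x, v⟫ + lam * (⟪y, v⟫ - ⟪x, v⟫) := by
      have h : lam * cm = ⟪x, v⟫ - ⟪z, v⟫ := div_mul_cancel₀ _ (ne_of_gt hcm0)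
      rw [hcm] at h; linear_combination h
    exact step_mem hK hv hp hq hy hfp hfq hmm0 hl0 hl2 hlD hfz hds' hDy hmm1 hmm2

end SlabArc2

namespace SlabArc3
open SlabArc SlabArc2

lemma cont_inner (v : E2) : Continuous fun x : E2 => ⟪x, v⟫ :=
  continuous_id.inner continuous_const

set_option maxHeartbeats 1600000 in
lemma cross_not_preconnected {K : Set E2} (hKc : IsCompact K)
    (hK : Convex ℝ K) {v : E2} (hv : ‖v‖ = 1) {β wS : ℝ} (hwS : 0 ≤ wS)
    {p q : E2} (hp : p ∈ K) (hpβ : ⟪p, v⟫ < β) (hq : q ∈ K) (hqβ : β + wS < ⟪q, v⟫) :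
    ¬ IsPreconnected ({x : E2 | β ≤ ⟪x, v⟫ ∧ ⟪x, v⟫ ≤ β + wS} \ K) := by
  intro hconn
  set Δ : ℝ := ⟪q, v⟫ - ⟪p, v⟫ with hΔ
  have hΔ0 : 0 < Δ := by rw [hΔ]; linarith
  set d : E2 := q - p with hd
  have hdv : ⟪d, v⟫ = Δ := by rw [hd, inner_sub_left, hΔ]
  have hdn0 : 0 < ‖d‖ := by
    rcases eq_or_lt_of_le (norm_nonneg d) with h | h
    · exfalso
      have : d = 0 := by rwa [eq_comm, norm_eq_zero] at h
      rw [this, inner_zero_left] at hdv; linarith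
    · exact h
  set e : E2 := ‖d‖⁻¹ • d with he
  have hee : ‖e‖ = 1 := by
    rw [he, norm_smul, norm_inv, norm_norm, inv_mul_cancel₀ (ne_of_gt hdn0)]
  have hev : ⟪e, v⟫ = ‖d‖⁻¹ * Δ := by rw [he, real_inner_smul_left, hdv]
  have hev0 : 0 < ⟪e, v⟫ := by rw [hev]; positivity
  set n : E2 := rot e with hn
  -- any point of the slab on the line through p, q is in K
  have hline : ∀ x : E2, β ≤ ⟪x, v⟫ → ⟪x, v⟫ ≤ β + wS → ⟪x, n⟫ = ⟪p, n⟫ → x ∈ K := by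
    intro x hx1 hx2 hxn
    have hw : ⟪x - p, rot e⟫ = 0 := by rw [inner_sub_left, ← hn, hxn, sub_self]
    have hdecw := decomp hee (x - p)
    rw [hw, zero_smul, add_zero] at hdecw
    set s : ℝ := ⟪x - p, e⟫ * ‖d‖⁻¹ with hs
    have hxps : x - p = s • d := by
      rw [hdecw, he, smul_smul]
    have hfx : ⟪x, v⟫ = ⟪p, v⟫ + s * Δ := by
      have h1 : ⟪x - p, v⟫ = s * Δ := by rw [hxps, real_inner_smul_left, hdv]
      rw [inner_sub_left] at h1; linarith
    have hs0 : 0 < s := by nlinarith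
    have hs1 : s < 1 := by nlinarith
    have hxc : x = (1 - s) • p + s • q := by
      have : x = p + s • (q - p) := by
        rw [← hd, ← hxps]; abel
      rw [this, smul_sub]; module
    rw [hxc]
    exact hK hp hq (by linarith) (le_of_lt hs0) (by ring)
  -- the midpoint at level β
  set s₀ : ℝ := (β - ⟪p, v⟫) / Δ with hs₀
  set m : E2 := p + s₀ • d with hm
  have hms : ⟪m, v⟫ = β := by
    rw [hm, inner_add_left, real_inner_smul_left, hdv, hs₀,
      div_mul_cancel₀ _ (ne_of_gt hΔ0)]
    ring
  -- far points
  obtain ⟨R, hR⟩ := hKc.isBounded.exists_norm_le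
  set κ : ℝ := ⟪e, v⟫ with hκ
  set T : ℝ := (|⟪m, n⟫ - ⟪p, n⟫| + 1) / κ + (|R| + ‖m‖ + 1) with hT
  have hT0 : 0 < T := by
    rw [hT]
    have h1 : 0 ≤ (|⟪m, n⟫ - ⟪p, n⟫| + 1) / κ := by positivity
    have h2 : (0:ℝ) < |R| + ‖m‖ + 1 := by positivity
    linarith
  have hTκ : |⟪m, n⟫ - ⟪p, n⟫| + 1 ≤ T * κ := by
    rw [hT, add_mul, div_mul_cancel₀ _ (ne_of_gt hev0)]
    nlinarith [abs_nonneg R, norm_nonneg m, hev0]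
  have hrotv : ∀ t : ℝ, ⟪m + t • rot v, v⟫ = β := by
    intro t
    have h0 : ⟪rot v, v⟫ = 0 := by rw [real_inner_comm]; exact inner_rot_self v
    rw [inner_add_left, real_inner_smul_left, h0, hms]
    ring
  have hrotn : ∀ t : ℝ, ⟪m + t • rot v, n⟫ = ⟪m, n⟫ + t * κ := by
    intro t
    have h0 : ⟪rot v, n⟫ = κ := by
      rw [hn, inner_rot_rot, hκ, real_inner_comm]
    rw [inner_add_left, real_inner_smul_left, h0]
  have hfar : ∀ t : ℝ, |t| = T → m + t • rot v ∉ K := by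
    intro t ht hmem
    have h1 := hR _ hmem
    have h2 : ‖t • rot v‖ ≤ ‖m‖ + ‖m + t • rot v‖ := by
      calc ‖t • rot v‖ = ‖(m + t • rot v) - m‖ := by congr 1; abel
        _ ≤ ‖m + t • rot v‖ + ‖m‖ := norm_sub_le _ _
        _ = ‖m‖ + ‖m + t • rot v‖ := by ring
    rw [norm_smul, norm_rot, hv, mul_one, Real.norm_eq_abs, ht] at h2
    have : R ≤ |R| := le_abs_self R
    have hTbig : |R| + ‖m‖ + 1 ≤ T := by
      have h3 : 0 ≤ (|⟪m, n⟫ - ⟪p, n⟫| + 1) / κ := by positivity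
      rw [hT]; linarith
    linarith
  -- the two open half-planes
  have hUo : IsOpen {x : E2 | ⟪p, n⟫ < ⟪x, n⟫} := isOpen_lt continuous_const (cont_inner n)
  have hVo : IsOpen {x : E2 | ⟪x, n⟫ < ⟪p, n⟫} := isOpen_lt (cont_inner n) continuous_const
  have hcover : {x : E2 | β ≤ ⟪x, v⟫ ∧ ⟪x, v⟫ ≤ β + wS} \ K ⊆
      {x : E2 | ⟪p, n⟫ < ⟪x, n⟫} ∪ {x : E2 | ⟪x, n⟫ < ⟪p, n⟫} := by
    rintro x ⟨⟨hx1, hx2⟩, hxK⟩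
    rcases lt_trichotomy ⟪x, n⟫ ⟪p, n⟫ with h | h | h
    · exact Or.inr h
    · exact absurd (hline x hx1 hx2 h) hxK
    · exact Or.inl h
  have habs : |⟪m, n⟫ - ⟪p, n⟫| ≥ ⟪m, n⟫ - ⟪p, n⟫ := le_abs_self _
  have habs2 : |⟪m, n⟫ - ⟪p, n⟫| ≥ -(⟪m, n⟫ - ⟪p, n⟫) := neg_le_abs _
  have hne1 : (({x : E2 | β ≤ ⟪x, v⟫ ∧ ⟪x, v⟫ ≤ β + wS} \ K) ∩
      {x : E2 | ⟪p, n⟫ < ⟪x, n⟫}).Nonempty := by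
    refine ⟨m + T • rot v, ⟨⟨?_, ?_⟩, hfar T (abs_of_pos hT0)⟩, ?_⟩
    · rw [hrotv]
    · rw [hrotv]; linarith
    · show ⟪p, n⟫ < ⟪m + T • rot v, n⟫
      rw [hrotn]; linarith
  have hne2 : (({x : E2 | β ≤ ⟪x, v⟫ ∧ ⟪x, v⟫ ≤ β + wS} \ K) ∩
      {x : E2 | ⟪x, n⟫ < ⟪p, n⟫}).Nonempty := by
    refine ⟨m + (-T) • rot v, ⟨⟨?_, ?_⟩, hfar (-T) (by rw [abs_neg]; exact abs_of_pos hT0)⟩, ?_⟩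
    · rw [hrotv]
    · rw [hrotv]; linarith
    · show ⟪m + (-T) • rot v, n⟫ < ⟪p, n⟫
      rw [hrotn]; nlinarith
  obtain ⟨z, _, hz1, hz2⟩ := hconn _ _ hUo hVo hcover hne1 hne2
  simp only [Set.mem_setOf_eq] at hz1 hz2
  linarith

end SlabArc3

namespace SlabArc4
open SlabArc SlabArc2 SlabArc3 Set

lemma frontier_of_dirmax {K : Set E2} (hKcl : IsClosed K) {v w x : E2}
    (hw : ‖w‖ = 1) (hwv : ⟪w, v⟫ = 0) (hx : x ∈ K)
    (hm : ∀ z ∈ K, ⟪z, v⟫ = ⟪x, v⟫ → ⟪z, w⟫ ≤ ⟪x, w⟫) : x ∈ frontier K := by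
  rw [hKcl.frontier_eq]
  refine ⟨hx, fun hint => ?_⟩
  rw [mem_interior_iff_mem_nhds, Metric.mem_nhds_iff] at hint
  obtain ⟨ε, hε0, hball⟩ := hint
  have hmem : x + (ε/2) • w ∈ K := by
    apply hball
    rw [Metric.mem_ball, dist_eq_norm, add_sub_cancel_left, norm_smul, hw, mul_one,
      Real.norm_eq_abs, abs_of_pos (by linarith)]
    linarith
  have h1 : ⟪x + (ε/2) • w, v⟫ = ⟪x, v⟫ := by
    rw [inner_add_left, real_inner_smul_left, hwv]; ring
  have h2 := hm _ hmem h1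
  have hww : ⟪w, w⟫ = 1 := by
    rw [real_inner_self_eq_norm_mul_norm, hw]; norm_num
  rw [inner_add_left, real_inner_smul_left, hww] at h2
  linarith

set_option maxHeartbeats 2000000 in
lemma graph_aux {K : Set E2} (hKc : IsCompact K) (hK : Convex ℝ K)
    {v : E2} (hv : ‖v‖ = 1) {v' : E2} (hv' : ‖v'‖ = 1) (hvv' : ⟪v, v'⟫ = 0)
    (hdec : ∀ x : E2, x = ⟪x, v⟫ • v + ⟪x, v'⟫ • v')
    {β M : ℝ} {y r : E2} (hy : y ∈ K) (hyβ : ⟪y, v⟫ < β)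
    (hr : r ∈ K) (hrM : ⟪r, v⟫ = M) (hmax : ∀ x ∈ K, ⟪x, v⟫ ≤ M) (hβM : β < M) :
    ∃ G : Set E2, IsPreconnected G ∧
      G ⊆ frontier K ∩ {x : E2 | β ≤ ⟪x, v⟫} ∧
      (∃ zM ∈ G, ⟪zM, v⟫ = M) ∧
      (∀ x ∈ frontier K, β ≤ ⟪x, v⟫ →
        (∀ z ∈ K, ⟪z, v⟫ = ⟪x, v⟫ → ⟪z, v'⟫ ≤ ⟪x, v'⟫) → x ∈ G) := by
  have hfcont : Continuous fun x : E2 => ⟪x, v⟫ := cont_inner v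
  have hgcont : Continuous fun x : E2 => ⟪x, v'⟫ := cont_inner v'
  have hvv : ⟪v, v⟫ = 1 := by rw [real_inner_self_eq_norm_mul_norm, hv]; norm_num
  have hv'2 : ⟪v', v'⟫ = 1 := by rw [real_inner_self_eq_norm_mul_norm, hv']; norm_num
  have hv'v : ⟪v', v⟫ = 0 := by rw [real_inner_comm]; exact hvv'
  have cq : ∀ x₁ x₂ : E2, ⟪x₁, v⟫ = ⟪x₂, v⟫ → ⟪x₁, v'⟫ = ⟪x₂, v'⟫ → x₁ = x₂ := by
    intro x₁ x₂ e1 e2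
    calc x₁ = ⟪x₁, v⟫ • v + ⟪x₁, v'⟫ • v' := hdec x₁
      _ = ⟪x₂, v⟫ • v + ⟪x₂, v'⟫ • v' := by rw [e1, e2]
      _ = x₂ := (hdec x₂).symm
  -- slices are nonempty
  have hsl_ne : ∀ t ∈ Icc β M, (K ∩ {x : E2 | ⟪x, v⟫ = t}).Nonempty := by
    rintro t ⟨ht1, ht2⟩
    have hd0 : 0 < M - ⟪y, v⟫ := by linarith
    set μ : ℝ := (t - ⟪y, v⟫) / (M - ⟪y, v⟫) with hμ
    have hμ0 : 0 ≤ μ := div_nonneg (by linarith) hd0.le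
    have hμ1 : μ ≤ 1 := by rw [hμ, div_le_one hd0]; linarith
    refine ⟨(1 - μ) • y + μ • r, hK hy hr (by linarith) hμ0 (by ring), ?_⟩
    show ⟪(1 - μ) • y + μ • r, v⟫ = t
    rw [inner_combo, hrM]
    have hc : μ * (M - ⟪y, v⟫) = t - ⟪y, v⟫ := by
      rw [hμ]; exact div_mul_cancel₀ _ hd0.ne'
    linear_combination hc
  have hslc : ∀ t : ℝ, IsCompact (K ∩ {x : E2 | ⟪x, v⟫ = t}) := fun t =>
    hKc.inter_right (isClosed_eq hfcont continuous_const)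
  set h : ℝ → ℝ := fun t => sSup ((fun x : E2 => ⟪x, v'⟫) '' (K ∩ {x : E2 | ⟪x, v⟫ = t}))
    with hh
  have hza : ∀ t ∈ Icc β M, ∃ z, z ∈ K ∧ ⟪z, v⟫ = t ∧ ⟪z, v'⟫ = h t ∧
      ∀ x ∈ K, ⟪x, v⟫ = t → ⟪x, v'⟫ ≤ h t := by
    intro t ht
    obtain ⟨z, hzmem, hzmax⟩ := (hslc t).exists_isMaxOn (hsl_ne t ht) hgcont.continuousOn
    have hgreat : IsGreatest ((fun x : E2 => ⟪x, v'⟫) '' (K ∩ {x : E2 | ⟪x, v⟫ = t}))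
        ⟪z, v'⟫ := by
      constructor
      · exact ⟨z, hzmem, rfl⟩
      · rintro _ ⟨x, hx, rfl⟩; exact hzmax hx
    have hht : h t = ⟪z, v'⟫ := hgreat.csSup_eq
    exact ⟨z, hzmem.1, hzmem.2, by rw [hht],
      fun x hx hfx => by rw [hht]; exact hzmax (⟨hx, hfx⟩ : x ∈ K ∩ {x : E2 | ⟪x, v⟫ = t})⟩
  clear_value h
  -- key combination bound
  have hkey : ∀ t ∈ Icc β M, ∀ w ∈ K, ∀ s ∈ Icc β M, ∀ μ : ℝ, 0 ≤ μ → μ ≤ 1 →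
      s = t + μ * (⟪w, v⟫ - t) → h t + μ * (⟪w, v'⟫ - h t) ≤ h s := by
    intro t ht w hw s hs μ h0 h1 hsμ
    obtain ⟨z, hzK, hzf, hzg, _⟩ := hza t ht
    obtain ⟨z', hz'K, hz'f, hz'g, hz'b⟩ := hza s hs
    have hws : (1 - μ) • z + μ • w ∈ K := hK hzK hw (by linarith) h0 (by ring)
    have hwsf : ⟪(1 - μ) • z + μ • w, v⟫ = s := by
      rw [inner_combo, hzf, hsμ]; ring
    have hwsg : ⟪(1 - μ) • z + μ • w, v'⟫ = h t + μ * (⟪w, v'⟫ - h t) := by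
      rw [inner_combo, hzg]; ring
    have hb := hz'b _ hws hwsf
    rw [hwsg] at hb
    exact hb
  -- continuity of h on Icc β M
  have hcont : ContinuousOn h (Icc β M) := by
    rw [Metric.continuousOn_iff]
    intro t ht ε hε
    obtain ⟨zt, hztK, hztf, hztg, hztb⟩ := hza t ht
    -- upper semicontinuity
    have hQc : IsCompact ((fun x : E2 => ⟪x, v⟫) '' (K ∩ {x : E2 | h t + ε/2 ≤ ⟪x, v'⟫})) :=
      (hKc.inter_right (isClosed_le continuous_const hgcont)).image hfcont
    have htn : t ∈ ((fun x : E2 => ⟪x, v⟫) '' (K ∩ {x : E2 | h t + ε/2 ≤ ⟪x, v'⟫}))ᶜ := by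
      rintro ⟨x, ⟨hxK, hxg⟩, hxf⟩
      have hb := hztb x hxK hxf
      have : h t + ε/2 ≤ ⟪x, v'⟫ := hxg
      linarith
    obtain ⟨δ₁, hδ₁0, hδ₁⟩ := Metric.isOpen_iff.mp hQc.isClosed.isOpen_compl t htn
    have hupper : ∀ s ∈ Icc β M, |s - t| < δ₁ → h s < h t + ε := by
      intro s hs hd
      obtain ⟨zs, hzsK, hzsf, hzsg, _⟩ := hza s hs
      by_contra hcon
      push_neg at hcon
      have hzsQ : zs ∈ K ∩ {x : E2 | h t + ε/2 ≤ ⟪x, v'⟫} := by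
        refine ⟨hzsK, ?_⟩
        show h t + ε/2 ≤ ⟪zs, v'⟫
        rw [hzsg]; linarith
      have : s ∈ (fun x : E2 => ⟪x, v⟫) '' (K ∩ {x : E2 | h t + ε/2 ≤ ⟪x, v'⟫}) :=
        ⟨zs, hzsQ, hzsf⟩
      exact hδ₁ (by rwa [Metric.mem_ball, Real.dist_eq]) this
    -- lower bounds
    set Ec : ℝ := |⟪y, v'⟫ - h t| + |⟪r, v'⟫ - h t| + 1 with hEc
    clear_value Ec
    have hE0 : 0 < Ec := by rw [hEc]; positivity
    have hyE : |⟪y, v'⟫ - h t| ≤ Ec := by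
      have := abs_nonneg (⟪r, v'⟫ - h t); rw [hEc]; linarith
    have hrE : |⟪r, v'⟫ - h t| ≤ Ec := by
      have := abs_nonneg (⟪y, v'⟫ - h t); rw [hEc]; linarith
    have hlow_le : ∀ s ∈ Icc β M, s ≤ t → (t - s) * Ec < ε/2 * (β - ⟪y, v⟫) →
        h t - ε < h s := by
      intro s hs hst hd
      have hfyt : ⟪y, v⟫ < t := lt_of_lt_of_le hyβ ht.1
      have hd0 : 0 < t - ⟪y, v⟫ := by linarith
      set μ : ℝ := (t - s) / (t - ⟪y, v⟫) with hμ
      have hμ0 : 0 ≤ μ := div_nonneg (by linarith) hd0.le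
      have hμ1 : μ ≤ 1 := by rw [hμ, div_le_one hd0]; linarith [hs.1]
      have hsμ : s = t + μ * (⟪y, v⟫ - t) := by
        have hc : μ * (t - ⟪y, v⟫) = t - s := by rw [hμ]; exact div_mul_cancel₀ _ hd0.ne'
        linear_combination hc
      have hb := hkey t ht y hy s hs μ hμ0 hμ1 hsμ
      have h1 : -(μ * Ec) ≤ μ * (⟪y, v'⟫ - h t) := by
        nlinarith [neg_abs_le (⟪y, v'⟫ - h t), hμ0, hyE]
      have h2 : μ * Ec < ε/2 := by
        rw [hμ, div_mul_eq_mul_div, div_lt_iff₀ hd0]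
        have hble : ε/2 * (β - ⟪y, v⟫) ≤ ε/2 * (t - ⟪y, v⟫) := by
          nlinarith [mul_nonneg (by linarith : (0:ℝ) ≤ ε/2) (by linarith [ht.1] : (0:ℝ) ≤ t - β)]
        linarith
      clear_value μ
      linarith
    have hlow_gt : ∀ s ∈ Icc β M, t < s → (s - t) * Ec < ε/2 * (M - t) →
        h t - ε < h s := by
      intro s hs hts hd
      have htM : t < M := lt_of_lt_of_le hts hs.2
      have hd0 : 0 < M - t := by linarith
      set μ : ℝ := (s - t) / (M - t) with hμ
      have hμ0 : 0 ≤ μ := div_nonneg (by linarith) hd0.le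
      have hμ1 : μ ≤ 1 := by rw [hμ, div_le_one hd0]; linarith [hs.2]
      have hsμ : s = t + μ * (⟪r, v⟫ - t) := by
        have hc : μ * (M - t) = s - t := by rw [hμ]; exact div_mul_cancel₀ _ hd0.ne'
        rw [hrM]; linear_combination -hc
      have hb := hkey t ht r hr s hs μ hμ0 hμ1 hsμ
      have h1 : -(μ * Ec) ≤ μ * (⟪r, v'⟫ - h t) := by
        nlinarith [neg_abs_le (⟪r, v'⟫ - h t), hμ0, hrE]
      have h2 : μ * Ec < ε/2 := by
        rw [hμ, div_mul_eq_mul_div, div_lt_iff₀ hd0]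
        linarith
      clear_value μ
      linarith
    -- choose δ
    have hβy : 0 < β - ⟪y, v⟫ := by linarith
    rcases eq_or_lt_of_le ht.2 with hteM | htM
    · refine ⟨min δ₁ (ε/2 * (β - ⟪y, v⟫) / Ec), lt_min hδ₁0 (div_pos (mul_pos (half_pos hε) hβy) hE0), ?_⟩
      intro s hs hd
      rw [Real.dist_eq] at hd
      rw [Real.dist_eq]
      have hd1 : |s - t| < δ₁ := lt_of_lt_of_le hd (min_le_left _ _)
      have hd2 : |s - t| < ε/2 * (β - ⟪y, v⟫) / Ec := lt_of_lt_of_le hd (min_le_right _ _)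
      have hst : s ≤ t := by rw [hteM]; exact hs.2
      have hlow := hlow_le s hs hst (by
        rw [← lt_div_iff₀ hE0]
        calc t - s ≤ |s - t| := by rw [abs_sub_comm]; exact le_abs_self _
          _ < _ := hd2)
      have hup := hupper s hs hd1
      rw [abs_lt]; constructor <;> linarith
    · refine ⟨min δ₁ (min (ε/2 * (β - ⟪y, v⟫) / Ec) (ε/2 * (M - t) / Ec)),
        lt_min hδ₁0 (lt_min (div_pos (mul_pos (half_pos hε) hβy) hE0)
          (div_pos (mul_pos (half_pos hε) (by linarith : (0:ℝ) < M - t)) hE0)), ?_⟩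
      intro s hs hd
      rw [Real.dist_eq] at hd
      rw [Real.dist_eq]
      have hd1 : |s - t| < δ₁ := lt_of_lt_of_le hd (min_le_left _ _)
      have hd2 : |s - t| < ε/2 * (β - ⟪y, v⟫) / Ec :=
        lt_of_lt_of_le hd ((min_le_right _ _).trans (min_le_left _ _))
      have hd3 : |s - t| < ε/2 * (M - t) / Ec :=
        lt_of_lt_of_le hd ((min_le_right _ _).trans (min_le_right _ _))
      have hup := hupper s hs hd1
      have hlow : h t - ε < h s := by
        rcases le_or_gt s t with hst | hst
        · refine hlow_le s hs hst ?_
          rw [← lt_div_iff₀ hE0]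
          calc t - s ≤ |s - t| := by rw [abs_sub_comm]; exact le_abs_self _
            _ < _ := hd2
        · refine hlow_gt s hs hst ?_
          rw [← lt_div_iff₀ hE0]
          calc s - t ≤ |s - t| := le_abs_self _
            _ < _ := hd3
      rw [abs_lt]; constructor <;> linarith
  -- the graph
  have hPf : ∀ t : ℝ, ⟪t • v + h t • v', v⟫ = t := by
    intro t
    rw [inner_add_left, real_inner_smul_left, real_inner_smul_left, hvv, hv'v]; ring
  have hPg : ∀ t : ℝ, ⟪t • v + h t • v', v'⟫ = h t := by
    intro t
    rw [inner_add_left, real_inner_smul_left, real_inner_smul_left, hvv', hv'2]; ring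
  refine ⟨(fun t : ℝ => t • v + h t • v') '' Icc β M, ?_, ?_, ?_, ?_⟩
  · exact isPreconnected_Icc.image _
      (((continuous_id.smul continuous_const).continuousOn).add
        (hcont.smul continuousOn_const))
  · rintro _ ⟨t, ht, rfl⟩
    obtain ⟨z, hzK, hzf, hzg, hzb⟩ := hza t ht
    have hPK : t • v + h t • v' ∈ K := by
      have := cq z (t • v + h t • v') (by rw [hzf, hPf]) (by rw [hzg, hPg])
      rwa [← this]
    constructor
    · refine frontier_of_dirmax hKc.isClosed hv' hv'v hPK ?_
      intro z' hz' hfz'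
      rw [hPg]
      rw [hPf] at hfz'
      exact hzb z' hz' hfz'
    · show β ≤ ⟪t • v + h t • v', v⟫
      rw [hPf]; exact ht.1
  · exact ⟨M • v + h M • v', ⟨M, ⟨hβM.le, le_refl M⟩, rfl⟩, hPf M⟩
  · intro x hxF hxβ hmx
    have hxK : x ∈ K := hKc.isClosed.frontier_subset hxF
    have hxM : ⟪x, v⟫ ≤ M := hmax x hxK
    have htIcc : ⟪x, v⟫ ∈ Icc β M := ⟨hxβ, hxM⟩
    obtain ⟨z, hzK, hzf, hzg, hzb⟩ := hza _ htIcc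
    have h1 : ⟪x, v'⟫ ≤ h ⟪x, v⟫ := hzb x hxK rfl
    have h2 : h ⟪x, v⟫ ≤ ⟪x, v'⟫ := by rw [← hzg]; exact hmx z hzK hzf
    exact ⟨⟪x, v⟫, htIcc, cq _ x (hPf _) (by rw [hPg]; linarith)⟩

set_option maxHeartbeats 1600000 in
lemma arc_preconnected {K : Set E2} (hKc : IsCompact K) (hK : Convex ℝ K)
    {v : E2} (hv : ‖v‖ = 1) {β : ℝ} {y : E2} (hy : y ∈ K) (hyβ : ⟪y, v⟫ < β) :
    IsPreconnected (frontier K ∩ {x : E2 | β ≤ ⟪x, v⟫}) := by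
  obtain ⟨r, hrK, hrmax⟩ := hKc.exists_isMaxOn ⟨y, hy⟩ (cont_inner v).continuousOn
  have hmax : ∀ x ∈ K, ⟪x, v⟫ ≤ ⟪r, v⟫ := fun x hx => hrmax hx
  have hfr : frontier K ⊆ K := hKc.isClosed.frontier_subset
  rcases lt_or_ge ⟪r, v⟫ β with hMβ | hβM
  · have hemp : frontier K ∩ {x : E2 | β ≤ ⟪x, v⟫} = ∅ := by
      ext x
      simp only [Set.mem_inter_iff, Set.mem_setOf_eq, Set.mem_empty_iff_false, iff_false,
        not_and]
      intro hxF hxβ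
      exact absurd (hmax x (hfr hxF)) (by linarith)
    rw [hemp]; exact isPreconnected_empty
  · have hTopconv : Convex ℝ (K ∩ {x : E2 | ⟪x, v⟫ = ⟪r, v⟫}) := by
      intro x hx z hz a b ha hb hab
      have hx2 : ⟪x, v⟫ = ⟪r, v⟫ := hx.2
      have hz2 : ⟪z, v⟫ = ⟪r, v⟫ := hz.2
      refine ⟨hK hx.1 hz.1 ha hb hab, ?_⟩
      show ⟪a • x + b • z, v⟫ = ⟪r, v⟫
      rw [inner_add_left, real_inner_smul_left, real_inner_smul_left, hx2, hz2]
      linear_combination ⟪r, v⟫ * hab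
    have hTopsub : K ∩ {x : E2 | ⟪x, v⟫ = ⟪r, v⟫} ⊆
        frontier K ∩ {x : E2 | β ≤ ⟪x, v⟫} := by
      rintro x ⟨hxK, hxM⟩
      have hxM' : ⟪x, v⟫ = ⟪r, v⟫ := hxM
      refine ⟨frontier_of_dirmax (v := (0:E2)) hKc.isClosed hv (inner_zero_right v) hxK ?_, ?_⟩
      · intro z hz _
        rw [hxM']
        exact hmax z hz
      · show β ≤ ⟪x, v⟫
        rw [hxM']; exact hβM
    rcases eq_or_lt_of_le hβM with hβM' | hβM'
    · have heq : frontier K ∩ {x : E2 | β ≤ ⟪x, v⟫} =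
          K ∩ {x : E2 | ⟪x, v⟫ = ⟪r, v⟫} := by
        apply Set.Subset.antisymm
        · rintro x ⟨hxF, hxβ⟩
          have hxβ' : β ≤ ⟪x, v⟫ := hxβ
          exact ⟨hfr hxF, le_antisymm (hmax x (hfr hxF)) (by rw [← hβM']; exact hxβ')⟩
        · exact hTopsub
      rw [heq]; exact hTopconv.isPreconnected
    · have hv'1 : ‖rot v‖ = 1 := by rw [norm_rot, hv]
      have hv'2 : ‖-rot v‖ = 1 := by rw [norm_neg, norm_rot, hv]
      have hvv'2 : ⟪v, -rot v⟫ = 0 := by rw [inner_neg_right, inner_rot_self, neg_zero]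
      have hdec2 : ∀ x : E2, x = ⟪x, v⟫ • v + ⟪x, -rot v⟫ • (-rot v) := by
        intro x
        rw [inner_neg_right, neg_smul, smul_neg, neg_neg]
        exact decomp hv x
      obtain ⟨G₁, hG₁pre, hG₁sub, ⟨z₁, hz₁G, hz₁M⟩, hG₁cov⟩ :=
        graph_aux hKc hK hv hv'1 (inner_rot_self v) (decomp hv) hy hyβ hrK rfl hmax hβM'
      obtain ⟨G₂, hG₂pre, hG₂sub, ⟨z₂, hz₂G, hz₂M⟩, hG₂cov⟩ :=
        graph_aux hKc hK hv hv'2 hvv'2 hdec2 hy hyβ hrK rfl hmax hβM'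
      have hz₁Top : z₁ ∈ K ∩ {x : E2 | ⟪x, v⟫ = ⟪r, v⟫} := ⟨hfr (hG₁sub hz₁G).1, hz₁M⟩
      have hz₂Top : z₂ ∈ K ∩ {x : E2 | ⟪x, v⟫ = ⟪r, v⟫} := ⟨hfr (hG₂sub hz₂G).1, hz₂M⟩
      have hU1 : IsPreconnected (G₁ ∪ (K ∩ {x : E2 | ⟪x, v⟫ = ⟪r, v⟫})) :=
        IsPreconnected.union z₁ hz₁G hz₁Top hG₁pre hTopconv.isPreconnected
      have hU2 : IsPreconnected ((G₁ ∪ (K ∩ {x : E2 | ⟪x, v⟫ = ⟪r, v⟫})) ∪ G₂) :=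
        IsPreconnected.union z₂ (Or.inr hz₂Top) hz₂G hU1 hG₂pre
      have hAeq : frontier K ∩ {x : E2 | β ≤ ⟪x, v⟫} =
          (G₁ ∪ (K ∩ {x : E2 | ⟪x, v⟫ = ⟪r, v⟫})) ∪ G₂ := by
        apply Set.Subset.antisymm
        · rintro x ⟨hxF, hxβ⟩
          have hxβ' : β ≤ ⟪x, v⟫ := hxβ
          rcases eq_or_lt_of_le (hmax x (hfr hxF)) with hxM | hxM
          · exact Or.inl (Or.inr ⟨hfr hxF, hxM⟩)
          · by_cases hmx : ∀ z ∈ K, ⟪z, v⟫ = ⟪x, v⟫ → ⟪z, rot v⟫ ≤ ⟪x, rot v⟫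
            · exact Or.inl (Or.inl (hG₁cov x hxF hxβ' hmx))
            · by_cases hmn : ∀ z ∈ K, ⟪z, v⟫ = ⟪x, v⟫ → ⟪z, -rot v⟫ ≤ ⟪x, -rot v⟫
              · exact Or.inr (hG₂cov x hxF hxβ' hmn)
              · exfalso
                push_neg at hmx hmn
                obtain ⟨zq, hzqK, hzqf, hzqg⟩ := hmx
                obtain ⟨zp, hzpK, hzpf, hzpg⟩ := hmn
                rw [inner_neg_right, inner_neg_right] at hzpg
                have hgp : ⟪zp, rot v⟫ < ⟪x, rot v⟫ := by linarith
                have hint := quad_mem_interior hK hv hzpK hzqK hrK hy hzpf hzqf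
                  hgp hzqg (lt_of_lt_of_le hyβ hxβ') hxM
                have hxFr : x ∈ K \ interior K := by
                  rw [← hKc.isClosed.frontier_eq]; exact hxF
                exact hxFr.2 hint
        · rintro x ((hx | hx) | hx)
          · exact hG₁sub hx
          · exact hTopsub hx
          · exact hG₂sub hx
      rw [hAeq]; exact hU2

end SlabArc4

end

open SlabArc SlabArc2 SlabArc3 SlabArc4

set_option maxHeartbeats 1600000

/-- If a slab `S` of width at least the width `w` of `K` intersects `K`, does not
cross `K`, and avoids the four special boundary points `a, b, c, d`, then
`S ∩ ∂K` lies in one of the four boundary arcs determined by `a, b, c, d`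
(i.e. in one connected component of `∂K \ {a,b,c,d}`). -/
theorem slab_meets_single_arc
    (K : Set (EuclideanSpace ℝ (Fin 2)))
    (hKc : IsCompact K) (hKconv : Convex ℝ K)
    (w : ℝ) (hw : 0 < w)
    (u : EuclideanSpace ℝ (Fin 2)) (hu : ‖u‖ = 1) (α : ℝ)
    (hsub : K ⊆ {x : EuclideanSpace ℝ (Fin 2) | α ≤ ⟪x, u⟫ ∧ ⟪x, u⟫ ≤ α + w})
    (hmin : ∀ S' w', IsSlab S' w' → K ⊆ S' → w ≤ w')
    (a c : EuclideanSpace ℝ (Fin 2))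
    (ha : a ∈ frontier K) (hc : c ∈ frontier K)
    (hamid : ⟪a, u⟫ = α + w / 2) (hcmid : ⟪c, u⟫ = α + w / 2) (hac : a ≠ c)
    (u' : EuclideanSpace ℝ (Fin 2)) (hu' : ‖u'‖ = 1) (huu' : ⟪u, u'⟫ = 0)
    (b d : EuclideanSpace ℝ (Fin 2))
    (hb : b ∈ K) (hbmax : ∀ x ∈ K, ⟪x, u'⟫ ≤ ⟪b, u'⟫)
    (hd : d ∈ K) (hdmin : ∀ x ∈ K, ⟪d, u'⟫ ≤ ⟪x, u'⟫)
    (S : Set (EuclideanSpace ℝ (Fin 2))) (wS : ℝ)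
    (hS : IsSlab S wS) (hwS : w ≤ wS)
    (hSK : (S ∩ K).Nonempty) (hconn : IsPreconnected (S \ K))
    (haS : a ∉ S) (hbS : b ∉ S) (hcS : c ∉ S) (hdS : d ∉ S) :
    ∃ x : EuclideanSpace ℝ (Fin 2),
      S ∩ frontier K ⊆ connectedComponentIn (frontier K \ {a, b, c, d}) x := by
  classical
  obtain ⟨v, β, hv, hSeq⟩ := hS
  subst hSeq
  have hwS0 : 0 < wS := lt_of_lt_of_le hw hwS
  have haK : a ∈ K := hKc.isClosed.frontier_subset ha
  have hcK : c ∈ K := hKc.isClosed.frontier_subset hc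
  by_cases hhigh : ∃ x ∈ K, β + wS < ⟪x, v⟫
  · by_cases hlow : ∃ x ∈ K, ⟪x, v⟫ < β
    · obtain ⟨p, hp, hpβ⟩ := hlow
      obtain ⟨q, hq, hqβ⟩ := hhigh
      exact absurd hconn (cross_not_preconnected hKc hKconv hv hwS0.le hp hpβ hq hqβ)
    · push_neg at hlow
      have hnotS : ∀ z : EuclideanSpace ℝ (Fin 2), z ∈ K →
          z ∉ {x : EuclideanSpace ℝ (Fin 2) | β ≤ ⟪x, v⟫ ∧ ⟪x, v⟫ ≤ β + wS} →
          β + wS < ⟪z, v⟫ := by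
        intro z hzK hzS
        by_contra hcon
        push_neg at hcon
        exact hzS ⟨hlow z hzK, hcon⟩
      have haβ := hnotS a haK haS
      have hbβ := hnotS b hb hbS
      have hcβ := hnotS c hcK hcS
      have hdβ := hnotS d hd hdS
      have hv' : ‖-v‖ = 1 := by rw [norm_neg, hv]
      have hya : ⟪a, -v⟫ < -(β + wS) := by rw [inner_neg_right]; linarith
      have hpre := arc_preconnected hKc hKconv hv' haK hya
      have hTeq : {x : EuclideanSpace ℝ (Fin 2) | β ≤ ⟪x, v⟫ ∧ ⟪x, v⟫ ≤ β + wS} ∩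
          frontier K = frontier K ∩ {x : E2 | -(β + wS) ≤ ⟪x, -v⟫} := by
        ext x
        simp only [Set.mem_inter_iff, Set.mem_setOf_eq, inner_neg_right]
        constructor
        · rintro ⟨⟨h1, h2⟩, hxF⟩
          exact ⟨hxF, by linarith⟩
        · rintro ⟨hxF, hx⟩
          exact ⟨⟨hlow x (hKc.isClosed.frontier_subset hxF), by linarith⟩, hxF⟩
      have hsub4 : frontier K ∩ {x : E2 | -(β + wS) ≤ ⟪x, -v⟫} ⊆
          frontier K \ {a, b, c, d} := by
        rintro x ⟨hxF, hx⟩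
        have hx' : -(β + wS) ≤ ⟪x, -v⟫ := hx
        rw [inner_neg_right] at hx'
        refine ⟨hxF, ?_⟩
        simp only [Set.mem_insert_iff, Set.mem_singleton_iff]
        push_neg
        refine ⟨?_, ?_, ?_, ?_⟩ <;> rintro rfl <;> linarith
      rcases Set.eq_empty_or_nonempty
        ({x : EuclideanSpace ℝ (Fin 2) | β ≤ ⟪x, v⟫ ∧ ⟪x, v⟫ ≤ β + wS} ∩ frontier K)
        with hE | ⟨x₀, hx₀⟩
      · exact ⟨a, by rw [hE]; exact Set.empty_subset _⟩
      · refine ⟨x₀, ?_⟩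
        rw [hTeq] at hx₀ ⊢
        exact hpre.subset_connectedComponentIn hx₀ hsub4
  · push_neg at hhigh
    have hnotS : ∀ z : EuclideanSpace ℝ (Fin 2), z ∈ K →
        z ∉ {x : EuclideanSpace ℝ (Fin 2) | β ≤ ⟪x, v⟫ ∧ ⟪x, v⟫ ≤ β + wS} →
        ⟪z, v⟫ < β := by
      intro z hzK hzS
      by_contra hcon
      push_neg at hcon
      exact hzS ⟨hcon, hhigh z hzK⟩
    have haβ := hnotS a haK haS
    have hbβ := hnotS b hb hbS
    have hcβ := hnotS c hcK hcS
    have hdβ := hnotS d hd hdS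
    have hpre := arc_preconnected hKc hKconv hv haK haβ
    have hTeq : {x : EuclideanSpace ℝ (Fin 2) | β ≤ ⟪x, v⟫ ∧ ⟪x, v⟫ ≤ β + wS} ∩
        frontier K = frontier K ∩ {x : E2 | β ≤ ⟪x, v⟫} := by
      ext x
      simp only [Set.mem_inter_iff, Set.mem_setOf_eq]
      constructor
      · rintro ⟨⟨h1, h2⟩, hxF⟩
        exact ⟨hxF, h1⟩
      · rintro ⟨hxF, hx⟩
        exact ⟨⟨hx, hhigh x (hKc.isClosed.frontier_subset hxF)⟩, hxF⟩
    have hsub4 : frontier K ∩ {x : E2 | β ≤ ⟪x, v⟫} ⊆ frontier K \ {a, b, c, d} := by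
      rintro x ⟨hxF, hx⟩
      have hx' : β ≤ ⟪x, v⟫ := hx
      refine ⟨hxF, ?_⟩
      simp only [Set.mem_insert_iff, Set.mem_singleton_iff]
      push_neg
      refine ⟨?_, ?_, ?_, ?_⟩ <;> rintro rfl <;> linarith
    rcases Set.eq_empty_or_nonempty
      ({x : EuclideanSpace ℝ (Fin 2) | β ≤ ⟪x, v⟫ ∧ ⟪x, v⟫ ≤ β + wS} ∩ frontier K)
      with hE | ⟨x₀, hx₀⟩
    · exact ⟨a, by rw [hE]; exact Set.empty_subset _⟩
    · refine ⟨x₀, ?_⟩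
      rw [hTeq] at hx₀ ⊢
      exact hpre.subset_connectedComponentIn hx₀ hsub4
end

section
/- There exists a family of 5 pairwise intersecting convex sets in ℝ³ that admits no line transversal, i.e., no single line intersects all 5 sets. -/
noncomputable section NoTransversal

abbrev E3 := EuclideanSpace ℝ (Fin 3)

def N : Fin 4 → Fin 3 → ℝ := ![![-1,-1,-1], ![-1,1,1], ![1,-1,1], ![1,1,-1]]

def L (i : Fin 4) (x : E3) : ℝ := N i 0 * x 0 + N i 1 * x 1 + N i 2 * x 2

def P : Fin 4 → Fin 4 → E3 :=
  ![!₂[0, !₂[-1,4/5,-4/5], !₂[4/5,-1,-4/5], !₂[4/5,-4/5,-1]],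
    ![!₂[-1,4/5,-4/5], 0, !₂[4/5,4/5,1], !₂[4/5,1,4/5]],
    ![!₂[4/5,-1,-4/5], !₂[4/5,4/5,1], 0, !₂[1,4/5,4/5]],
    ![!₂[4/5,-4/5,-1], !₂[4/5,1,4/5], !₂[1,4/5,4/5], 0]]

def C : Fin 4 → E3 :=
  ![!₂[-1/3,-1/3,-1/3], !₂[-1/3,1/3,1/3], !₂[1/3,-1/3,1/3], !₂[1/3,1/3,-1/3]]

@[simp] lemma Nv00 : N 0 0 = -1 := rfl
@[simp] lemma Nv01 : N 0 1 = -1 := rfl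
@[simp] lemma Nv02 : N 0 2 = -1 := rfl
@[simp] lemma Nv10 : N 1 0 = -1 := rfl
@[simp] lemma Nv11 : N 1 1 = 1 := rfl
@[simp] lemma Nv12 : N 1 2 = 1 := rfl
@[simp] lemma Nv20 : N 2 0 = 1 := rfl
@[simp] lemma Nv21 : N 2 1 = -1 := rfl
@[simp] lemma Nv22 : N 2 2 = 1 := rfl
@[simp] lemma Nv30 : N 3 0 = 1 := rfl
@[simp] lemma Nv31 : N 3 1 = 1 := rfl
@[simp] lemma Nv32 : N 3 2 = -1 := rfl
@[simp] lemma Pv000 : P 0 0 0 = 0 := rfl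
@[simp] lemma Pv001 : P 0 0 1 = 0 := rfl
@[simp] lemma Pv002 : P 0 0 2 = 0 := rfl
@[simp] lemma Pv010 : P 0 1 0 = -1 := rfl
@[simp] lemma Pv011 : P 0 1 1 = 4/5 := rfl
@[simp] lemma Pv012 : P 0 1 2 = (-4/5) := rfl
@[simp] lemma Pv020 : P 0 2 0 = 4/5 := rfl
@[simp] lemma Pv021 : P 0 2 1 = -1 := rfl
@[simp] lemma Pv022 : P 0 2 2 = (-4/5) := rfl
@[simp] lemma Pv030 : P 0 3 0 = 4/5 := rfl
@[simp] lemma Pv031 : P 0 3 1 = (-4/5) := rfl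
@[simp] lemma Pv032 : P 0 3 2 = -1 := rfl
@[simp] lemma Pv100 : P 1 0 0 = -1 := rfl
@[simp] lemma Pv101 : P 1 0 1 = 4/5 := rfl
@[simp] lemma Pv102 : P 1 0 2 = (-4/5) := rfl
@[simp] lemma Pv110 : P 1 1 0 = 0 := rfl
@[simp] lemma Pv111 : P 1 1 1 = 0 := rfl
@[simp] lemma Pv112 : P 1 1 2 = 0 := rfl
@[simp] lemma Pv120 : P 1 2 0 = 4/5 := rfl
@[simp] lemma Pv121 : P 1 2 1 = 4/5 := rfl
@[simp] lemma Pv122 : P 1 2 2 = 1 := rfl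
@[simp] lemma Pv130 : P 1 3 0 = 4/5 := rfl
@[simp] lemma Pv131 : P 1 3 1 = 1 := rfl
@[simp] lemma Pv132 : P 1 3 2 = 4/5 := rfl
@[simp] lemma Pv200 : P 2 0 0 = 4/5 := rfl
@[simp] lemma Pv201 : P 2 0 1 = -1 := rfl
@[simp] lemma Pv202 : P 2 0 2 = (-4/5) := rfl
@[simp] lemma Pv210 : P 2 1 0 = 4/5 := rfl
@[simp] lemma Pv211 : P 2 1 1 = 4/5 := rfl
@[simp] lemma Pv212 : P 2 1 2 = 1 := rfl
@[simp] lemma Pv220 : P 2 2 0 = 0 := rfl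
@[simp] lemma Pv221 : P 2 2 1 = 0 := rfl
@[simp] lemma Pv222 : P 2 2 2 = 0 := rfl
@[simp] lemma Pv230 : P 2 3 0 = 1 := rfl
@[simp] lemma Pv231 : P 2 3 1 = 4/5 := rfl
@[simp] lemma Pv232 : P 2 3 2 = 4/5 := rfl
@[simp] lemma Pv300 : P 3 0 0 = 4/5 := rfl
@[simp] lemma Pv301 : P 3 0 1 = (-4/5) := rfl
@[simp] lemma Pv302 : P 3 0 2 = -1 := rfl
@[simp] lemma Pv310 : P 3 1 0 = 4/5 := rfl
@[simp] lemma Pv311 : P 3 1 1 = 1 := rfl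
@[simp] lemma Pv312 : P 3 1 2 = 4/5 := rfl
@[simp] lemma Pv320 : P 3 2 0 = 1 := rfl
@[simp] lemma Pv321 : P 3 2 1 = 4/5 := rfl
@[simp] lemma Pv322 : P 3 2 2 = 4/5 := rfl
@[simp] lemma Pv330 : P 3 3 0 = 0 := rfl
@[simp] lemma Pv331 : P 3 3 1 = 0 := rfl
@[simp] lemma Pv332 : P 3 3 2 = 0 := rfl
@[simp] lemma Cv00 : C 0 0 = (-1/3) := rfl
@[simp] lemma Cv01 : C 0 1 = (-1/3) := rfl
@[simp] lemma Cv02 : C 0 2 = (-1/3) := rfl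
@[simp] lemma Cv10 : C 1 0 = (-1/3) := rfl
@[simp] lemma Cv11 : C 1 1 = 1/3 := rfl
@[simp] lemma Cv12 : C 1 2 = 1/3 := rfl
@[simp] lemma Cv20 : C 2 0 = 1/3 := rfl
@[simp] lemma Cv21 : C 2 1 = (-1/3) := rfl
@[simp] lemma Cv22 : C 2 2 = 1/3 := rfl
@[simp] lemma Cv30 : C 3 0 = 1/3 := rfl
@[simp] lemma Cv31 : C 3 1 = 1/3 := rfl
@[simp] lemma Cv32 : C 3 2 = (-1/3) := rfl

@[simp] lemma fmk2 : (⟨2, by omega⟩ : Fin 4) = 2 := rfl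
@[simp] lemma fmk3 : (⟨3, by omega⟩ : Fin 4) = 3 := rfl
@[simp] lemma fmk2' : (⟨2, by omega⟩ : Fin 3) = 2 := rfl

lemma T1 : ∀ i j : Fin 4, i ≠ j → L i (P i j) = 1 := by
  intro i j h; fin_cases i <;> fin_cases j <;> simp at h <;> norm_num [L]

lemma T2 : ∀ m i j : Fin 4, i ≠ j → m ≠ i → m ≠ j → L m (P i j) < 1 := by
  intro m i j h1 h2 h3
  fin_cases m <;> fin_cases i <;> fin_cases j <;> simp at h1 h2 h3 <;> norm_num [L]

lemma Psymm : ∀ i j : Fin 4, P i j = P j i := by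
  intro i j; fin_cases i <;> fin_cases j <;> rfl

def D3 : Set E3 := {x | x 0^2 + x 1^2 + x 2^2 ≤ 1/3}
def Fa (i : Fin 4) : Set E3 := {x | L i x = 1 ∧ ∀ j, j ≠ i → L j x < 1}
def Af (i : Fin 4) : Set E3 := Fa i ∪ {x | ∃ j, j ≠ i ∧ x = P i j}

lemma memAf {i : Fin 4} {x : E3} (hx : x ∈ Af i) : L i x = 1 ∧ ∀ m, L m x ≤ 1 := by
  rcases hx with ⟨h1, h2⟩ | ⟨j, hj, rfl⟩
  · refine ⟨h1, fun m => ?_⟩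
    by_cases hm : m = i
    · exact le_of_eq (hm ▸ h1)
    · exact le_of_lt (h2 m hm)
  · refine ⟨T1 i j (Ne.symm hj), fun m => ?_⟩
    by_cases hm1 : m = i
    · exact le_of_eq (hm1 ▸ T1 i j (Ne.symm hj))
    by_cases hm2 : m = j
    · subst hm2; exact le_of_eq (Psymm i m ▸ T1 m i hm1)
    · exact le_of_lt (T2 m i j (Ne.symm hj) hm1 hm2)

lemma memAf_plane {i j : Fin 4} (hij : j ≠ i) {x : E3} (hx : x ∈ Af i)
    (h1 : L j x = 1) : x = P i j := by
  rcases hx with ⟨_, h2⟩ | ⟨a, ha, rfl⟩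
  · exact absurd h1 (ne_of_lt (h2 j hij))
  · by_cases hja : j = a
    · rw [hja]
    · have h2 : L j (P i a) < 1 := T2 j i a (Ne.symm ha) hij hja
      exact absurd h1 (ne_of_lt h2)

lemma ball_le {x : E3} (hx : x ∈ D3) : ∀ m, L m x ≤ 1 := by
  have h : x 0^2 + x 1^2 + x 2^2 ≤ 1/3 := hx
  intro m
  fin_cases m
  · show N 0 0 * x 0 + N 0 1 * x 1 + N 0 2 * x 2 ≤ 1
    simp only [Nv00, Nv01, Nv02]
    nlinarith [sq_nonneg (x 0 - x 1), sq_nonneg (x 0 - x 2), sq_nonneg (x 1 - x 2)]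
  · show N 1 0 * x 0 + N 1 1 * x 1 + N 1 2 * x 2 ≤ 1
    simp only [Nv10, Nv11, Nv12]
    nlinarith [sq_nonneg (x 0 + x 1), sq_nonneg (x 0 + x 2), sq_nonneg (x 1 - x 2)]
  · show N 2 0 * x 0 + N 2 1 * x 1 + N 2 2 * x 2 ≤ 1
    simp only [Nv20, Nv21, Nv22]
    nlinarith [sq_nonneg (x 0 + x 1), sq_nonneg (x 1 + x 2), sq_nonneg (x 0 - x 2)]
  · show N 3 0 * x 0 + N 3 1 * x 1 + N 3 2 * x 2 ≤ 1
    simp only [Nv30, Nv31, Nv32]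
    nlinarith [sq_nonneg (x 0 + x 2), sq_nonneg (x 1 + x 2), sq_nonneg (x 0 - x 1)]

lemma coord_add (x y : E3) (m : Fin 3) : (x + y) m = x m + y m := rfl
lemma coord_smul (a : ℝ) (x : E3) (m : Fin 3) : (a • x) m = a * x m := rfl

lemma convexD3 : Convex ℝ D3 := by
  intro x hx y hy a b ha hb hab
  have hx' : x 0^2 + x 1^2 + x 2^2 ≤ 1/3 := hx
  have hy' : y 0^2 + y 1^2 + y 2^2 ≤ 1/3 := hy
  show (a • x + b • y) 0^2 + (a • x + b • y) 1^2 + (a • x + b • y) 2^2 ≤ 1/3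
  simp only [coord_add, coord_smul]
  nlinarith [mul_nonneg (mul_nonneg ha hb) (sq_nonneg (x 0 - y 0)),
    mul_nonneg (mul_nonneg ha hb) (sq_nonneg (x 1 - y 1)),
    mul_nonneg (mul_nonneg ha hb) (sq_nonneg (x 2 - y 2)),
    mul_le_mul_of_nonneg_left hx' ha, mul_le_mul_of_nonneg_left hy' hb]

lemma Llinear (m : Fin 4) (x y : E3) (a b : ℝ) :
    L m (a • x + b • y) = a * L m x + b * L m y := by
  simp only [L, coord_add, coord_smul]; ring

lemma convexAf (i : Fin 4) : Convex ℝ (Af i) := by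
  intro x hx y hy a b ha hb hab
  rcases eq_or_lt_of_le ha with ha0 | ha'
  · have hb1 : b = 1 := by linarith
    rw [← ha0, hb1, zero_smul, one_smul, zero_add]; exact hy
  rcases eq_or_lt_of_le hb with hb0 | hb'
  · have ha1 : a = 1 := by linarith
    rw [← hb0, ha1, zero_smul, one_smul, add_zero]; exact hx
  have hx1 := memAf hx
  have hy1 := memAf hy
  by_cases hstrict : ∀ j, j ≠ i → L j (a • x + b • y) < 1
  · exact Or.inl ⟨by rw [Llinear, hx1.1, hy1.1]; linarith, hstrict⟩
  · push_neg at hstrict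
    obtain ⟨j, hji, hge⟩ := hstrict
    rw [Llinear] at hge
    have hLx : L j x = 1 := by
      rcases lt_or_eq_of_le (hx1.2 j) with h | h
      · nlinarith [hy1.2 j]
      · exact h
    have hLy : L j y = 1 := by
      rcases lt_or_eq_of_le (hy1.2 j) with h | h
      · nlinarith
      · exact h
    have hxP := memAf_plane hji hx hLx
    have hyP := memAf_plane hji hy hLy
    exact Or.inr ⟨j, hji, by rw [hxP, hyP, ← add_smul, hab, one_smul]⟩

lemma pmem {i j : Fin 4} (h : i ≠ j) : P i j ∈ Af i := Or.inr ⟨j, Ne.symm h, rfl⟩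

lemma cmemD (i : Fin 4) : C i ∈ D3 := by
  show C i 0^2 + C i 1^2 + C i 2^2 ≤ 1/3
  fin_cases i <;> norm_num

lemma cmemFa (i : Fin 4) : C i ∈ Fa i := by
  constructor
  · show N i 0 * C i 0 + N i 1 * C i 1 + N i 2 * C i 2 = 1
    fin_cases i <;> norm_num
  · intro j hj
    show N j 0 * C i 0 + N j 1 * C i 1 + N j 2 * C i 2 < 1
    fin_cases i <;> fin_cases j <;> simp_all <;> norm_num

lemma L_zero (i : Fin 4) : L i 0 = 0 := by
  have h0 : ∀ m : Fin 3, (0 : E3) m = 0 := fun m => rfl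
  simp [L, h0]

lemma D3_ne_Af (i : Fin 4) : D3 ≠ Af i := by
  intro h
  have h0 : (0 : E3) ∈ D3 := by show (0:E3) 0^2 + (0:E3) 1^2 + (0:E3) 2^2 ≤ 1/3; norm_num [show ∀ m : Fin 3, (0 : E3) m = 0 from fun m => rfl]
  rw [h] at h0
  have := (memAf h0).1
  rw [L_zero] at this
  norm_num at this

lemma LC (i j : Fin 4) : L j (C i) = if i = j then 1 else -1/3 := by
  show N j 0 * C i 0 + N j 1 * C i 1 + N j 2 * C i 2 = _
  fin_cases i <;> fin_cases j <;>
    first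
      | (rw [if_pos (by decide)]; norm_num)
      | (rw [if_neg (by decide)]; norm_num)

lemma Af_ne {i j : Fin 4} (h : i ≠ j) : Af i ≠ Af j := by
  intro he
  have h1 : C i ∈ Af i := Or.inl (cmemFa i)
  rw [he] at h1
  have h2 := (memAf h1).1
  rw [LC] at h2
  simp [h] at h2
  norm_num at h2

def A5 : Fin 5 → Set E3 := ![D3, Af 0, Af 1, Af 2, Af 3]

lemma A5inj : Function.Injective A5 := by
  have g0 : ∀ i : Fin 4, ¬ (D3 = Af i) := fun i => D3_ne_Af i
  intro i j h
  fin_cases i <;> fin_cases j <;> simp only [A5] at h <;>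
    first
      | rfl
      | (exact absurd h (D3_ne_Af _))
      | (exact absurd h.symm (D3_ne_Af _))
      | (exact absurd h (Af_ne (by decide)))

lemma A5conv : ∀ i, Convex ℝ (A5 i) := by
  intro i
  fin_cases i
  · exact convexD3
  · exact convexAf 0
  · exact convexAf 1
  · exact convexAf 2
  · exact convexAf 3

lemma A5pair : ∀ i j, (A5 i ∩ A5 j).Nonempty := by
  have hD : ∀ i : Fin 4, (D3 ∩ Af i).Nonempty :=
    fun i => ⟨C i, cmemD i, Or.inl (cmemFa i)⟩
  have hDA : ∀ i : Fin 4, (Af i ∩ D3).Nonempty :=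
    fun i => ⟨C i, Or.inl (cmemFa i), cmemD i⟩
  have hAA : ∀ i j : Fin 4, i ≠ j → (Af i ∩ Af j).Nonempty :=
    fun i j h => ⟨P i j, pmem h, Psymm i j ▸ pmem (Ne.symm h)⟩
  have hDD : (D3 ∩ D3).Nonempty := ⟨C 0, cmemD 0, cmemD 0⟩
  have hsame : ∀ i : Fin 4, (Af i ∩ Af i).Nonempty :=
    fun i => ⟨C i, Or.inl (cmemFa i), Or.inl (cmemFa i)⟩
  intro i j
  fin_cases i <;> fin_cases j <;>
    first
      | exact hDD
      | exact hD _
      | exact hDA _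
      | exact hsame _
      | exact hAA _ _ (by decide)

/-- There exist 5 pairwise intersecting convex sets in ℝ³ with no line
transversal. -/
theorem five_convex_sets_no_line_transversal :
    ∃ A : Fin 5 → Set (EuclideanSpace ℝ (Fin 3)),
      Function.Injective A ∧
      (∀ i, Convex ℝ (A i)) ∧
      (∀ i j, (A i ∩ A j).Nonempty) ∧
      ∀ ℓ : Set (EuclideanSpace ℝ (Fin 3)),
        (∃ p w : EuclideanSpace ℝ (Fin 3), w ≠ 0 ∧
          ℓ = {x : EuclideanSpace ℝ (Fin 3) | ∃ t : ℝ, x = p + t • w}) →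
        ∃ i, ℓ ∩ A i = ∅ := by
  refine ⟨A5, A5inj, A5conv, A5pair, ?_⟩
  rintro ℓ ⟨p, w, hw, rfl⟩
  by_contra hcon
  push_neg at hcon
  have hne : ∀ i : Fin 5,
      ({x : E3 | ∃ t : ℝ, x = p + t • w} ∩ A5 i).Nonempty := hcon
  obtain ⟨xD, ⟨s, rfl⟩, hsD⟩ := hne 0
  have hs : p + s • w ∈ D3 := hsD
  have ht4 : ∀ i : Fin 4, ∃ u : ℝ, p + u • w ∈ Af i := by
    intro i
    fin_cases i
    · obtain ⟨x, ⟨u, rfl⟩, hx⟩ := hne 1; exact ⟨u, hx⟩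
    · obtain ⟨x, ⟨u, rfl⟩, hx⟩ := hne 2; exact ⟨u, hx⟩
    · obtain ⟨x, ⟨u, rfl⟩, hx⟩ := hne 3; exact ⟨u, hx⟩
    · obtain ⟨x, ⟨u, rfl⟩, hx⟩ := hne 4; exact ⟨u, hx⟩
  choose t ht using ht4
  have coord : ∀ (u : ℝ) (m : Fin 3), (p + u • w) m = p m + u * w m :=
    fun u m => rfl
  have Llin : ∀ (i : Fin 4) (u : ℝ), L i (p + u • w) = L i p + u * L i w := by
    intro i u; simp only [L, coord]; ring
  have hone : ∀ i : Fin 4, L i p + t i * L i w = 1 := by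
    intro i; rw [← Llin]; exact (memAf (ht i)).1
  by_cases hz : ∃ i : Fin 4, L i w = 0
  · obtain ⟨i, hi⟩ := hz
    have hip : L i p = 1 := by have := hone i; rw [hi, mul_zero] at this; linarith
    have hpl : ∀ u : ℝ, L i (p + u • w) = 1 := fun u => by
      rw [Llin, hi, mul_zero, add_zero, hip]
    by_cases hz2 : ∃ j : Fin 4, j ≠ i ∧ L j w = 0
    · obtain ⟨j, hji, hj⟩ := hz2
      have hjp : L j p = 1 := by have := hone j; rw [hj, mul_zero] at this; linarith
      have hplj : ∀ u : ℝ, L j (p + u • w) = 1 := fun u => by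
        rw [Llin, hj, mul_zero, add_zero, hjp]
      obtain ⟨k, hki, hkj⟩ : ∃ k : Fin 4, k ≠ i ∧ k ≠ j := by
        have h4 : ∀ a b : Fin 4, ∃ k, k ≠ a ∧ k ≠ b := by decide
        exact h4 i j
      have e1 : p + t k • w = P k i := memAf_plane (Ne.symm hki) (ht k) (hpl (t k))
      have e2 : L j (p + t k • w) = 1 := hplj (t k)
      rw [e1] at e2
      exact absurd e2 (ne_of_lt (T2 j k i hki (Ne.symm hkj) hji))
    · have hPj : ∀ j : Fin 4, j ≠ i → p + t j • w = P j i := fun j hj =>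
        memAf_plane (Ne.symm hj) (ht j) (hpl (t j))
      fin_cases i
      · have e1 := hPj 1 (by decide)
        have e2 := hPj 2 (by decide)
        have e3 := hPj 3 (by decide)
        have a2 : p 2 + t 1 * w 2 = -4/5 := by
          have := congrFun (congrArg WithLp.ofLp e1) 2; rw [coord] at this; simpa using this
        have b2 : p 2 + t 2 * w 2 = -4/5 := by
          have := congrFun (congrArg WithLp.ofLp e2) 2; rw [coord] at this; simpa using this
        have c2 : p 2 + t 3 * w 2 = -1 := by
          have := congrFun (congrArg WithLp.ofLp e3) 2; rw [coord] at this; simpa using this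
        have a0 : p 0 + t 1 * w 0 = -1 := by
          have := congrFun (congrArg WithLp.ofLp e1) 0; rw [coord] at this; simpa using this
        have b0 : p 0 + t 2 * w 0 = 4/5 := by
          have := congrFun (congrArg WithLp.ofLp e2) 0; rw [coord] at this; simpa using this
        have h1 : (t 2 - t 1) * w 2 = 0 := by linear_combination b2 - a2
        have h2 : (t 3 - t 1) * w 2 = -(1/5) := by linear_combination c2 - a2
        have h3 : (t 2 - t 1) * w 0 = 9/5 := by linear_combination b0 - a0
        rcases mul_eq_zero.1 h1 with hz1 | hz1
        · rw [hz1, zero_mul] at h3; norm_num at h3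
        · rw [hz1, mul_zero] at h2; norm_num at h2
      · have e1 := hPj 0 (by decide)
        have e2 := hPj 2 (by decide)
        have e3 := hPj 3 (by decide)
        have a1 : p 1 + t 0 * w 1 = 4/5 := by
          have := congrFun (congrArg WithLp.ofLp e1) 1; rw [coord] at this; simpa using this
        have b1 : p 1 + t 2 * w 1 = 4/5 := by
          have := congrFun (congrArg WithLp.ofLp e2) 1; rw [coord] at this; simpa using this
        have c1 : p 1 + t 3 * w 1 = 1 := by
          have := congrFun (congrArg WithLp.ofLp e3) 1; rw [coord] at this; simpa using this
        have a0 : p 0 + t 0 * w 0 = -1 := by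
          have := congrFun (congrArg WithLp.ofLp e1) 0; rw [coord] at this; simpa using this
        have b0 : p 0 + t 2 * w 0 = 4/5 := by
          have := congrFun (congrArg WithLp.ofLp e2) 0; rw [coord] at this; simpa using this
        have h1 : (t 2 - t 0) * w 1 = 0 := by linear_combination b1 - a1
        have h2 : (t 3 - t 0) * w 1 = 1/5 := by linear_combination c1 - a1
        have h3 : (t 2 - t 0) * w 0 = 9/5 := by linear_combination b0 - a0
        rcases mul_eq_zero.1 h1 with hz1 | hz1
        · rw [hz1, zero_mul] at h3; norm_num at h3
        · rw [hz1, mul_zero] at h2; norm_num at h2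
      · have e1 := hPj 0 (by decide)
        have e2 := hPj 1 (by decide)
        have e3 := hPj 3 (by decide)
        have a0 : p 0 + t 0 * w 0 = 4/5 := by
          have := congrFun (congrArg WithLp.ofLp e1) 0; rw [coord] at this; simpa using this
        have b0 : p 0 + t 1 * w 0 = 4/5 := by
          have := congrFun (congrArg WithLp.ofLp e2) 0; rw [coord] at this; simpa using this
        have c0 : p 0 + t 3 * w 0 = 1 := by
          have := congrFun (congrArg WithLp.ofLp e3) 0; rw [coord] at this; simpa using this
        have a1 : p 1 + t 0 * w 1 = -1 := by
          have := congrFun (congrArg WithLp.ofLp e1) 1; rw [coord] at this; simpa using this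
        have b1 : p 1 + t 1 * w 1 = 4/5 := by
          have := congrFun (congrArg WithLp.ofLp e2) 1; rw [coord] at this; simpa using this
        have h1 : (t 1 - t 0) * w 0 = 0 := by linear_combination b0 - a0
        have h2 : (t 3 - t 0) * w 0 = 1/5 := by linear_combination c0 - a0
        have h3 : (t 1 - t 0) * w 1 = 9/5 := by linear_combination b1 - a1
        rcases mul_eq_zero.1 h1 with hz1 | hz1
        · rw [hz1, zero_mul] at h3; norm_num at h3
        · rw [hz1, mul_zero] at h2; norm_num at h2
      · have e1 := hPj 0 (by decide)
        have e2 := hPj 1 (by decide)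
        have e3 := hPj 2 (by decide)
        have a0 : p 0 + t 0 * w 0 = 4/5 := by
          have := congrFun (congrArg WithLp.ofLp e1) 0; rw [coord] at this; simpa using this
        have b0 : p 0 + t 1 * w 0 = 4/5 := by
          have := congrFun (congrArg WithLp.ofLp e2) 0; rw [coord] at this; simpa using this
        have c0 : p 0 + t 2 * w 0 = 1 := by
          have := congrFun (congrArg WithLp.ofLp e3) 0; rw [coord] at this; simpa using this
        have a1 : p 1 + t 0 * w 1 = -4/5 := by
          have := congrFun (congrArg WithLp.ofLp e1) 1; rw [coord] at this; simpa using this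
        have b1 : p 1 + t 1 * w 1 = 1 := by
          have := congrFun (congrArg WithLp.ofLp e2) 1; rw [coord] at this; simpa using this
        have h1 : (t 1 - t 0) * w 0 = 0 := by linear_combination b0 - a0
        have h2 : (t 2 - t 0) * w 0 = 1/5 := by linear_combination c0 - a0
        have h3 : (t 1 - t 0) * w 1 = 9/5 := by linear_combination b1 - a1
        rcases mul_eq_zero.1 h1 with hz1 | hz1
        · rw [hz1, zero_mul] at h3; norm_num at h3
        · rw [hz1, mul_zero] at h2; norm_num at h2
  · push_neg at hz
    have hple : ∀ (i : Fin 4) (u : ℝ), (u = s ∨ ∃ j, u = t j) →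
        L i (p + u • w) ≤ 1 := by
      rintro i u (rfl | ⟨j, rfl⟩)
      · exact ball_le hs i
      · exact (memAf (ht j)).2 i
    have hcmp : ∀ (i : Fin 4) (u : ℝ), (u = s ∨ ∃ j, u = t j) →
        (u - t i) * L i w ≤ 0 := by
      intro i u hu
      have h1 := hple i u hu
      rw [Llin] at h1
      have h2 := hone i
      nlinarith [h1, h2]
    have tmaxt : ∀ i j : Fin 4, 0 < L i w → t j ≤ t i := by
      intro i j hi
      have := hcmp i (t j) (Or.inr ⟨j, rfl⟩)
      nlinarith
    have tmint : ∀ i j : Fin 4, L i w < 0 → t i ≤ t j := by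
      intro i j hi
      have := hcmp i (t j) (Or.inr ⟨j, rfl⟩)
      nlinarith
    have eqtop : ∀ i j : Fin 4, i ≠ j → 0 < L i w → 0 < L j w →
        p + t i • w = P i j := by
      intro i j hij hi hj
      have e : t i = t j := le_antisymm (tmaxt j i hj) (tmaxt i j hi)
      have h1 : L j (p + t i • w) = 1 := by rw [e]; exact (memAf (ht j)).1
      exact memAf_plane (Ne.symm hij) (ht i) h1
    have eqbot : ∀ i j : Fin 4, i ≠ j → L i w < 0 → L j w < 0 →
        p + t i • w = P i j := by
      intro i j hij hi hj
      have e : t i = t j := le_antisymm (tmint i j hi) (tmint j i hj)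
      have h1 : L j (p + t i • w) = 1 := by rw [e]; exact (memAf (ht j)).1
      exact memAf_plane (Ne.symm hij) (ht i) h1
    have trip : ∀ i j k : Fin 4, i ≠ j → i ≠ k → j ≠ k →
        p + t i • w = P i j → t i = t k → False := by
      intro i j k hij hik hjk he hik2
      have h1 : L k (p + t i • w) = 1 := by rw [hik2]; exact (memAf (ht k)).1
      rw [he] at h1
      exact absurd h1 (ne_of_lt (T2 k i j hij (Ne.symm hik) (Ne.symm hjk)))
    have trippos : ∀ i j k : Fin 4, i ≠ j → i ≠ k → j ≠ k →
        0 < L i w → 0 < L j w → 0 < L k w → False := by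
      intro i j k hij hik hjk hi hj hk
      exact trip i j k hij hik hjk (eqtop i j hij hi hj)
        (le_antisymm (tmaxt k i hk) (tmaxt i k hi))
    have tripneg : ∀ i j k : Fin 4, i ≠ j → i ≠ k → j ≠ k →
        L i w < 0 → L j w < 0 → L k w < 0 → False := by
      intro i j k hij hik hjk hi hj hk
      exact trip i j k hij hik hjk (eqbot i j hij hi hj)
        (le_antisymm (tmint i k hi) (tmint k i hk))
    have twotwo : ∀ i j k l : Fin 4, i ≠ j → k ≠ l → i ≠ k → i ≠ l → j ≠ k → j ≠ l →
        0 < L i w → 0 < L j w → L k w < 0 → L l w < 0 →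
        ∃ μ : ℝ, (P k l 0 + μ * (P i j 0 - P k l 0))^2
          + (P k l 1 + μ * (P i j 1 - P k l 1))^2
          + (P k l 2 + μ * (P i j 2 - P k l 2))^2 ≤ 1/3 := by
      intro i j k l hij hkl hik hil hjk hjl hi hj hk hl
      have e1 : p + t i • w = P i j := eqtop i j hij hi hj
      have e2 : p + t k • w = P k l := eqbot k l hkl hk hl
      have hne' : t k ≠ t i := by
        intro h
        exact trip k l i hkl (Ne.symm hik) (Ne.symm hil) e2 h
      have hd : t i - t k ≠ 0 := fun h => hne' (sub_eq_zero.1 h).symm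
      refine ⟨(s - t k) / (t i - t k), ?_⟩
      have key : ∀ m : Fin 3,
          P k l m + (s - t k) / (t i - t k) * (P i j m - P k l m) = p m + s * w m := by
        intro m
        have a1 : p m + t i * w m = P i j m := by rw [← coord]; exact congrFun (congrArg WithLp.ofLp e1) m
        have a2 : p m + t k * w m = P k l m := by rw [← coord]; exact congrFun (congrArg WithLp.ofLp e2) m
        have a3 : P i j m - P k l m = (t i - t k) * w m := by linear_combination a2 - a1
        rw [a3, ← mul_assoc, div_mul_cancel₀ _ hd]
        linear_combination -a2
      rw [key 0, key 1, key 2]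
      exact hs
    rcases lt_or_gt_of_ne (hz 0) with s0 | s0 <;>
      rcases lt_or_gt_of_ne (hz 1) with s1 | s1 <;>
      rcases lt_or_gt_of_ne (hz 2) with s2 | s2 <;>
      rcases lt_or_gt_of_ne (hz 3) with s3 | s3
    · exact tripneg 0 1 2 (by decide) (by decide) (by decide) s0 s1 s2
    · exact tripneg 0 1 2 (by decide) (by decide) (by decide) s0 s1 s2
    · exact tripneg 0 1 3 (by decide) (by decide) (by decide) s0 s1 s3
    · obtain ⟨μ, hμ⟩ := twotwo 2 3 0 1 (by decide) (by decide) (by decide)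
        (by decide) (by decide) (by decide) s2 s3 s0 s1
      norm_num at hμ
      nlinarith [hμ, sq_nonneg (μ - 1/2)]
    · exact tripneg 0 2 3 (by decide) (by decide) (by decide) s0 s2 s3
    · obtain ⟨μ, hμ⟩ := twotwo 1 3 0 2 (by decide) (by decide) (by decide)
        (by decide) (by decide) (by decide) s1 s3 s0 s2
      norm_num at hμ
      nlinarith [hμ, sq_nonneg (μ - 1/2)]
    · obtain ⟨μ, hμ⟩ := twotwo 1 2 0 3 (by decide) (by decide) (by decide)
        (by decide) (by decide) (by decide) s1 s2 s0 s3
      norm_num at hμ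
      nlinarith [hμ, sq_nonneg (μ - 1/2)]
    · exact trippos 1 2 3 (by decide) (by decide) (by decide) s1 s2 s3
    · exact tripneg 1 2 3 (by decide) (by decide) (by decide) s1 s2 s3
    · obtain ⟨μ, hμ⟩ := twotwo 0 3 1 2 (by decide) (by decide) (by decide)
        (by decide) (by decide) (by decide) s0 s3 s1 s2
      norm_num at hμ
      nlinarith [hμ, sq_nonneg (μ - 1/2)]
    · obtain ⟨μ, hμ⟩ := twotwo 0 2 1 3 (by decide) (by decide) (by decide)
        (by decide) (by decide) (by decide) s0 s2 s1 s3
      norm_num at hμ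
      nlinarith [hμ, sq_nonneg (μ - 1/2)]
    · exact trippos 0 2 3 (by decide) (by decide) (by decide) s0 s2 s3
    · obtain ⟨μ, hμ⟩ := twotwo 0 1 2 3 (by decide) (by decide) (by decide)
        (by decide) (by decide) (by decide) s0 s1 s2 s3
      norm_num at hμ
      nlinarith [hμ, sq_nonneg (μ - 1/2)]
    · exact trippos 0 1 3 (by decide) (by decide) (by decide) s0 s1 s3
    · exact trippos 0 1 2 (by decide) (by decide) (by decide) s0 s1 s2
    · exact trippos 0 1 2 (by decide) (by decide) (by decide) s0 s1 s2
end NoTransversal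
end

section
/- Let F be a finite family of convex sets in ℝ³ whose elements pairwise intersect, and suppose there is a plane P such that the orthogonal projections of at least a β fraction of all triples of F onto P have a common point, for some β > 0. Then there is a constant α(β) > 0 and a line intersecting at least α(β)·|F| members of F. -/
open scoped RealInnerProductSpace

local notation "E3" => EuclideanSpace ℝ (Fin 3)

/-- strict "lexicographic" comparison via two functionals -/
def lt2 (e₀ e₁ : E3) (a b : E3) : Prop :=
  ⟪a, e₀⟫ < ⟪b, e₀⟫ ∨ (⟪a, e₀⟫ = ⟪b, e₀⟫ ∧ ⟪a, e₁⟫ < ⟪b, e₁⟫)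

def Neg2 (e₀ e₁ : E3) (v : E3) : Prop :=
  ⟪v, e₀⟫ < 0 ∨ (⟪v, e₀⟫ = 0 ∧ ⟪v, e₁⟫ < 0)

def IsMin2 (e₀ e₁ : E3) (S : Set E3) (m : E3) : Prop :=
  m ∈ S ∧ ∀ x ∈ S, x = m ∨ lt2 e₀ e₁ m x

lemma lt2_asymm {e₀ e₁ a b} (h : lt2 e₀ e₁ a b) (h' : lt2 e₀ e₁ b a) : False := by
  rcases h with h | ⟨h1, h2⟩ <;> rcases h' with h' | ⟨h1', h2'⟩ <;> linarith

lemma lt2_iff_neg2 {e₀ e₁ a b} : lt2 e₀ e₁ a b ↔ Neg2 e₀ e₁ (a - b) := by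
  simp only [lt2, Neg2, inner_sub_left, sub_lt_zero, sub_eq_zero]

lemma neg2_not_zero {e₀ e₁} (h : Neg2 e₀ e₁ 0) : False := by
  rcases h with h | ⟨h1, h2⟩
  · simp at h
  · simp at h2

lemma neg2_smul {e₀ e₁ v} {c : ℝ} (hc : 0 < c) (h : Neg2 e₀ e₁ v) : Neg2 e₀ e₁ (c • v) := by
  rcases h with h | ⟨h1, h2⟩
  · exact Or.inl (by rw [real_inner_smul_left]; nlinarith)
  · exact Or.inr ⟨by rw [real_inner_smul_left, h1, mul_zero],
      by rw [real_inner_smul_left]; nlinarith⟩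

lemma lt2_total (e₀ e₁ u : E3)
    (inj : ∀ v : E3, ⟪v, u⟫ = 0 → ⟪v, e₀⟫ = 0 → ⟪v, e₁⟫ = 0 → v = 0)
    {a b : E3} (ha : ⟪a, u⟫ = 0) (hb : ⟪b, u⟫ = 0) :
    a = b ∨ lt2 e₀ e₁ a b ∨ lt2 e₀ e₁ b a := by
  rcases lt_trichotomy (⟪a, e₀⟫) (⟪b, e₀⟫) with h | h | h
  · exact Or.inr (Or.inl (Or.inl h))
  · rcases lt_trichotomy (⟪a, e₁⟫) (⟪b, e₁⟫) with h' | h' | h'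
    · exact Or.inr (Or.inl (Or.inr ⟨h, h'⟩))
    · left
      have := inj (a - b) (by rw [inner_sub_left]; linarith)
        (by rw [inner_sub_left]; linarith) (by rw [inner_sub_left]; linarith)
      have : a - b = 0 := this
      linear_combination (norm := abel) this
    · exact Or.inr (Or.inr (Or.inr ⟨h.symm, h'⟩))
  · exact Or.inr (Or.inr (Or.inl h))

lemma exists_isMin2 (e₀ e₁ u : E3)
    (inj : ∀ v : E3, ⟪v, u⟫ = 0 → ⟪v, e₀⟫ = 0 → ⟪v, e₁⟫ = 0 → v = 0)
    {S : Set E3} (hS : IsCompact S) (hne : S.Nonempty) (hpl : ∀ x ∈ S, ⟪x, u⟫ = 0) :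
    ∃ m, IsMin2 e₀ e₁ S m := by
  have cont0 : Continuous fun x : E3 => ⟪x, e₀⟫ := continuous_id.inner continuous_const
  have cont1 : Continuous fun x : E3 => ⟪x, e₁⟫ := continuous_id.inner continuous_const
  obtain ⟨x₀, hx₀S, hx₀⟩ := hS.exists_isMinOn hne cont0.continuousOn
  set S' : Set E3 := S ∩ {x | ⟪x, e₀⟫ = ⟪x₀, e₀⟫} with hS'def
  have hS'c : IsCompact S' := hS.inter_right (isClosed_eq cont0 continuous_const)
  have hS'ne : S'.Nonempty := ⟨x₀, hx₀S, rfl⟩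
  obtain ⟨m, hmS', hm⟩ := hS'c.exists_isMinOn hS'ne cont1.continuousOn
  refine ⟨m, hmS'.1, fun x hx => ?_⟩
  have hfm : ⟪m, e₀⟫ = ⟪x₀, e₀⟫ := hmS'.2
  rcases lt_trichotomy (⟪m, e₀⟫) (⟪x, e₀⟫) with h | h | h
  · exact Or.inr (Or.inl h)
  · have hxS' : x ∈ S' := ⟨hx, by show ⟪x, e₀⟫ = ⟪x₀, e₀⟫; rw [← h, hfm]⟩
    have hg : ⟪m, e₁⟫ ≤ ⟪x, e₁⟫ := hm hxS'
    rcases eq_or_lt_of_le hg with h' | h'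
    · left
      have := inj (x - m) (by rw [inner_sub_left, hpl x hx, hpl m hmS'.1]; ring)
        (by rw [inner_sub_left, h]; ring) (by rw [inner_sub_left, h']; ring)
      linear_combination (norm := abel) this
    · exact Or.inr (Or.inr ⟨h, h'⟩)
  · exact absurd (hx₀ hx) (by simp only [← hfm]; exact not_le.mpr h)

-- auxiliary: first coefficient vanishes
lemma h3aux (e₀ e₁ : E3) {x y z : ℝ} {v₁ v₂ v₃ : E3}
    (hx : 0 ≤ x) (hy : 0 ≤ y) (hz : 0 ≤ z)
    (h₁ : Neg2 e₀ e₁ v₁) (h₂ : Neg2 e₀ e₁ v₂) (h₃ : Neg2 e₀ e₁ v₃)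
    (hsum : x • v₁ + y • v₂ + z • v₃ = 0) : x = 0 := by
  have hf : x * ⟪v₁, e₀⟫ + y * ⟪v₂, e₀⟫ + z * ⟪v₃, e₀⟫ = 0 := by
    have := congrArg (fun w : E3 => ⟪w, e₀⟫) hsum
    simpa only [inner_add_left, real_inner_smul_left, inner_zero_left] using this
  have hg : x * ⟪v₁, e₁⟫ + y * ⟪v₂, e₁⟫ + z * ⟪v₃, e₁⟫ = 0 := by
    have := congrArg (fun w : E3 => ⟪w, e₁⟫) hsum
    simpa only [inner_add_left, real_inner_smul_left, inner_zero_left] using this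
  have hf1 : ⟪v₁, e₀⟫ ≤ 0 := by rcases h₁ with h | ⟨h, _⟩ <;> linarith
  have hf2 : ⟪v₂, e₀⟫ ≤ 0 := by rcases h₂ with h | ⟨h, _⟩ <;> linarith
  have hf3 : ⟪v₃, e₀⟫ ≤ 0 := by rcases h₃ with h | ⟨h, _⟩ <;> linarith
  have t1 : x * ⟪v₁, e₀⟫ ≤ 0 := mul_nonpos_iff.mpr (Or.inl ⟨hx, hf1⟩)
  have t2 : y * ⟪v₂, e₀⟫ ≤ 0 := mul_nonpos_iff.mpr (Or.inl ⟨hy, hf2⟩)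
  have t3 : z * ⟪v₃, e₀⟫ ≤ 0 := mul_nonpos_iff.mpr (Or.inl ⟨hz, hf3⟩)
  have e1 : x * ⟪v₁, e₀⟫ = 0 := by linarith
  have e2 : y * ⟪v₂, e₀⟫ = 0 := by linarith
  have e3 : z * ⟪v₃, e₀⟫ = 0 := by linarith
  by_contra hx0
  have hxpos : 0 < x := lt_of_le_of_ne hx (Ne.symm hx0)
  have hv1f : ⟪v₁, e₀⟫ = 0 := by
    rcases mul_eq_zero.mp e1 with h | h
    · exact absurd h hx0
    · exact h
  have hg1 : ⟪v₁, e₁⟫ < 0 := by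
    rcases h₁ with h | ⟨_, h⟩
    · linarith
    · exact h
  have s2 : y * ⟪v₂, e₁⟫ ≤ 0 := by
    rcases eq_or_lt_of_le hy with h | h
    · rw [← h]; simp
    · have : ⟪v₂, e₀⟫ = 0 := by
        rcases mul_eq_zero.mp e2 with h' | h'
        · exact absurd h' (ne_of_gt h)
        · exact h'
      have : ⟪v₂, e₁⟫ < 0 := by
        rcases h₂ with h' | ⟨_, h'⟩
        · linarith
        · exact h'
      exact le_of_lt (mul_neg_of_pos_of_neg h this)
  have s3 : z * ⟪v₃, e₁⟫ ≤ 0 := by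
    rcases eq_or_lt_of_le hz with h | h
    · rw [← h]; simp
    · have : ⟪v₃, e₀⟫ = 0 := by
        rcases mul_eq_zero.mp e3 with h' | h'
        · exact absurd h' (ne_of_gt h)
        · exact h'
      have : ⟪v₃, e₁⟫ < 0 := by
        rcases h₃ with h' | ⟨_, h'⟩
        · linarith
        · exact h'
      exact le_of_lt (mul_neg_of_pos_of_neg h this)
  nlinarith [mul_neg_of_pos_of_neg hxpos hg1]

lemma h3 (e₀ e₁ : E3) {x y z : ℝ} {v₁ v₂ v₃ : E3}
    (hx : 0 ≤ x) (hy : 0 ≤ y) (hz : 0 ≤ z)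
    (h₁ : Neg2 e₀ e₁ v₁) (h₂ : Neg2 e₀ e₁ v₂) (h₃ : Neg2 e₀ e₁ v₃)
    (hsum : x • v₁ + y • v₂ + z • v₃ = 0) : x = 0 ∧ y = 0 ∧ z = 0 := by
  refine ⟨h3aux e₀ e₁ hx hy hz h₁ h₂ h₃ hsum,
    h3aux e₀ e₁ hy hx hz h₂ h₁ h₃ ?_, h3aux e₀ e₁ hz hx hy h₃ h₁ h₂ ?_⟩
  · linear_combination (norm := module) hsum
  · linear_combination (norm := module) hsum

lemma dep2 (a b c : ℝ × ℝ) :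
    ∃ x y z : ℝ, ¬(x = 0 ∧ y = 0 ∧ z = 0) ∧ x • a + y • b + z • c = 0 := by
  have hnli : ¬ LinearIndependent ℝ ![a, b, c] := by
    intro hli
    have hc := hli.fintype_card_le_finrank
    simp [Module.finrank_prod] at hc
  obtain ⟨g, hg, i, hi⟩ := Fintype.not_linearIndependent_iff.mp hnli
  rw [Fin.sum_univ_three] at hg
  simp only [Matrix.cons_val_zero, Matrix.cons_val_one, Matrix.head_cons,
    Matrix.cons_val_two, Matrix.tail_cons] at hg
  refine ⟨g 0, g 1, g 2, ?_, hg⟩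
  rintro ⟨h0, h1, h2⟩
  fin_cases i
  · exact hi h0
  · exact hi h1
  · exact hi h2

lemma dep3 (e₀ e₁ u : E3)
    (inj : ∀ v : E3, ⟪v, u⟫ = 0 → ⟪v, e₀⟫ = 0 → ⟪v, e₁⟫ = 0 → v = 0)
    {v₁ v₂ v₃ : E3} (h1 : ⟪v₁, u⟫ = 0) (h2 : ⟪v₂, u⟫ = 0) (h3 : ⟪v₃, u⟫ = 0) :
    ∃ x y z : ℝ, ¬(x = 0 ∧ y = 0 ∧ z = 0) ∧ x • v₁ + y • v₂ + z • v₃ = 0 := by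
  obtain ⟨x, y, z, hne, heq⟩ := dep2 (⟪v₁, e₀⟫, ⟪v₁, e₁⟫) (⟪v₂, e₀⟫, ⟪v₂, e₁⟫)
    (⟪v₃, e₀⟫, ⟪v₃, e₁⟫)
  have hfst := congrArg Prod.fst heq
  have hsnd := congrArg Prod.snd heq
  simp only [Prod.smul_fst, Prod.smul_snd, Prod.fst_add, Prod.snd_add,
    smul_eq_mul, Prod.fst_zero, Prod.snd_zero] at hfst hsnd
  refine ⟨x, y, z, hne, ?_⟩
  refine inj _ (by simp only [inner_add_left, real_inner_smul_left, h1, h2, h3]; ring)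
    (by simp only [inner_add_left, real_inner_smul_left]; exact hfst)
    (by simp only [inner_add_left, real_inner_smul_left]; exact hsnd)

-- lone negative coefficient: express v₁ as nonneg combination
lemma solve1 {x y z : ℝ} {v₁ v₂ v₃ : E3} (hx : x < 0) (hy : 0 ≤ y) (hz : 0 ≤ z)
    (hsum : x • v₁ + y • v₂ + z • v₃ = 0) :
    ∃ lam mu : ℝ, 0 ≤ lam ∧ 0 ≤ mu ∧ v₁ = lam • v₂ + mu • v₃ := by
  have hx0 : x ≠ 0 := ne_of_lt hx
  refine ⟨y / (-x), z / (-x), div_nonneg hy (by linarith), div_nonneg hz (by linarith), ?_⟩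
  have h1 : (-x) • v₁ = y • v₂ + z • v₃ := by
    linear_combination (norm := module) -hsum
  have h2 : v₁ = (-x)⁻¹ • ((-x) • v₁) := by
    rw [inv_smul_smul₀ (by simpa using hx0)]
  rw [h2, h1, smul_add, smul_smul, smul_smul]
  rw [div_eq_inv_mul, div_eq_inv_mul]

lemma combo (e₀ e₁ u : E3)
    (inj : ∀ v : E3, ⟪v, u⟫ = 0 → ⟪v, e₀⟫ = 0 → ⟪v, e₁⟫ = 0 → v = 0)
    {v₁ v₂ v₃ : E3} (h1 : ⟪v₁, u⟫ = 0) (h2 : ⟪v₂, u⟫ = 0) (h3' : ⟪v₃, u⟫ = 0)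
    (n1 : Neg2 e₀ e₁ v₁) (n2 : Neg2 e₀ e₁ v₂) (n3 : Neg2 e₀ e₁ v₃) :
    ∃ lam mu : ℝ, 0 ≤ lam ∧ 0 ≤ mu ∧
      (v₁ = lam • v₂ + mu • v₃ ∨ v₂ = lam • v₁ + mu • v₃ ∨ v₃ = lam • v₁ + mu • v₂) := by
  obtain ⟨x, y, z, hne, hsum⟩ := dep3 e₀ e₁ u inj h1 h2 h3'
  have hsum21 : y • v₂ + x • v₁ + z • v₃ = 0 := by
    linear_combination (norm := module) hsum
  have hsum31 : z • v₃ + x • v₁ + y • v₂ = 0 := by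
    linear_combination (norm := module) hsum
  have hneg : (-x) • v₁ + (-y) • v₂ + (-z) • v₃ = 0 := by
    linear_combination (norm := module) -hsum
  have hneg21 : (-y) • v₂ + (-x) • v₁ + (-z) • v₃ = 0 := by
    linear_combination (norm := module) -hsum
  have hneg31 : (-z) • v₃ + (-x) • v₁ + (-y) • v₂ = 0 := by
    linear_combination (norm := module) -hsum
  rcases le_or_gt 0 x with hx | hx <;> rcases le_or_gt 0 y with hy | hy <;>
    rcases le_or_gt 0 z with hz | hz
  · exact absurd (h3 e₀ e₁ hx hy hz n1 n2 n3 hsum) hne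
  · -- z < 0 lone negative
    obtain ⟨l, m, hl, hm, he⟩ := solve1 hz hx hy hsum31
    exact ⟨l, m, hl, hm, Or.inr (Or.inr he)⟩
  · obtain ⟨l, m, hl, hm, he⟩ := solve1 hy hx hz hsum21
    exact ⟨l, m, hl, hm, Or.inr (Or.inl he)⟩
  · -- y < 0, z < 0 : x lone nonneg; if x = 0 all ≤ 0
    rcases eq_or_lt_of_le hx with hx0 | hx0
    · have := h3 e₀ e₁ (by linarith) (le_of_lt (by linarith : (0:ℝ) < -y))
        (le_of_lt (by linarith : (0:ℝ) < -z)) n1 n2 n3 hneg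
      linarith [this.2.1]
    · obtain ⟨l, m, hl, hm, he⟩ := solve1 (by linarith : -x < 0)
        (by linarith : (0:ℝ) ≤ -y) (by linarith : (0:ℝ) ≤ -z) hneg
      exact ⟨l, m, hl, hm, Or.inl he⟩
  · obtain ⟨l, m, hl, hm, he⟩ := solve1 hx hy hz hsum
    exact ⟨l, m, hl, hm, Or.inl he⟩
  · -- x < 0, z < 0, y lone nonneg
    rcases eq_or_lt_of_le hy with hy0 | hy0
    · have := h3 e₀ e₁ (le_of_lt (by linarith : (0:ℝ) < -x)) (by linarith)
        (le_of_lt (by linarith : (0:ℝ) < -z)) n1 n2 n3 hneg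
      linarith [this.1]
    · obtain ⟨l, m, hl, hm, he⟩ := solve1 (by linarith : -y < 0)
        (by linarith : (0:ℝ) ≤ -x) (by linarith : (0:ℝ) ≤ -z) hneg21
      exact ⟨l, m, hl, hm, Or.inr (Or.inl he)⟩
  · -- x < 0, y < 0, z lone nonneg
    rcases eq_or_lt_of_le hz with hz0 | hz0
    · have := h3 e₀ e₁ (le_of_lt (by linarith : (0:ℝ) < -x))
        (le_of_lt (by linarith : (0:ℝ) < -y)) (by linarith) n1 n2 n3 hneg
      linarith [this.1]
    · obtain ⟨l, m, hl, hm, he⟩ := solve1 (by linarith : -z < 0)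
        (by linarith : (0:ℝ) ≤ -x) (by linarith : (0:ℝ) ≤ -y) hneg31
      exact ⟨l, m, hl, hm, Or.inr (Or.inr he)⟩
  · -- all negative
    have := h3 e₀ e₁ (le_of_lt (by linarith : (0:ℝ) < -x))
      (le_of_lt (by linarith : (0:ℝ) < -y)) (le_of_lt (by linarith : (0:ℝ) < -z))
      n1 n2 n3 hneg
    linarith [this.1]

lemma build {Ca Cb Cc : Set E3} (hCa : Convex ℝ Ca) (hCb : Convex ℝ Cb) (hCc : Convex ℝ Cc)
    {m pab pac pbc : E3}
    (hma : m ∈ Ca) (hmb : m ∈ Cb) (hmc : m ∈ Cc)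
    (habA : pab ∈ Ca) (habB : pab ∈ Cb) (hacC : pac ∈ Cc) (hbcC : pbc ∈ Cc)
    {lam mu : ℝ} (hl : 0 ≤ lam) (hmu : 0 ≤ mu)
    (heq : pab - m = lam • (pac - m) + mu • (pbc - m)) :
    ∃ w, w ∈ Ca ∧ w ∈ Cb ∧ w ∈ Cc ∧ w - m = (1 / (1 + lam + mu)) • (pab - m) := by
  set ε : ℝ := 1 / (1 + lam + mu) with hε
  have hden : (0:ℝ) < 1 + lam + mu := by linarith
  have hε0 : 0 < ε := by positivity
  have hε1 : ε ≤ 1 := by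
    rw [hε, div_le_one hden]; linarith
  set w : E3 := m + ε • (pab - m) with hw
  have hwa : w = (1 - ε) • m + ε • pab := by
    rw [hw]; module
  refine ⟨w, ?_, ?_, ?_, by rw [hw]; abel⟩
  · rw [hwa]; exact hCa hma habA (by linarith) (le_of_lt hε0) (by ring)
  · rw [hwa]; exact hCb hmb habB (by linarith) (le_of_lt hε0) (by ring)
  · -- w = (1 - ε*lam - ε*mu) • m + (ε*lam) • pac + (ε*mu) • pbc
    have hcoef : ε * lam + ε * mu ≤ 1 := by
      have : ε * (lam + mu) ≤ 1 := by
        rw [hε, div_mul_eq_mul_div, div_le_one hden]; linarith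
      linarith [this]
    have hwc : w = (1 - ε * lam - ε * mu) • m + (ε * lam) • pac + (ε * mu) • pbc := by
      rw [hw]
      linear_combination (norm := module) ε • heq
    rw [hwc]
    have h1 : (1 - ε * lam - ε * mu) • m + (ε * lam) • pac + (ε * mu) • pbc
        = ∑ i : Fin 3, (![1 - ε * lam - ε * mu, ε * lam, ε * mu] i) • (![m, pac, pbc] i) := by
      rw [Fin.sum_univ_three]
      simp [Matrix.cons_val_zero, Matrix.cons_val_one, Matrix.head_cons, Matrix.cons_val_two]
    rw [h1]
    refine hCc.sum_mem ?_ ?_ ?_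
    · intro i _
      fin_cases i
      · simpa using by nlinarith [mul_nonneg (le_of_lt hε0) hl, mul_nonneg (le_of_lt hε0) hmu]
      · simpa using mul_nonneg (le_of_lt hε0) hl
      · simpa using mul_nonneg (le_of_lt hε0) hmu
    · rw [Fin.sum_univ_three]; simp; ring
    · intro i _
      fin_cases i <;> simpa using by assumption

lemma key (e₀ e₁ u : E3)
    (inj : ∀ v : E3, ⟪v, u⟫ = 0 → ⟪v, e₀⟫ = 0 → ⟪v, e₁⟫ = 0 → v = 0)
    {C₁ C₂ C₃ : Set E3} (hc₁ : Convex ℝ C₁) (hc₂ : Convex ℝ C₂) (hc₃ : Convex ℝ C₃)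
    (hp₁ : ∀ x ∈ C₁, ⟪x, u⟫ = 0) (hp₂ : ∀ x ∈ C₂, ⟪x, u⟫ = 0) (hp₃ : ∀ x ∈ C₃, ⟪x, u⟫ = 0)
    {m : E3} (hm : IsMin2 e₀ e₁ (C₁ ∩ C₂ ∩ C₃) m) :
    IsMin2 e₀ e₁ (C₁ ∩ C₂) m ∨ IsMin2 e₀ e₁ (C₁ ∩ C₃) m ∨ IsMin2 e₀ e₁ (C₂ ∩ C₃) m := by
  obtain ⟨⟨⟨hm1, hm2⟩, hm3⟩, hmmin⟩ := hm
  have hmu : ⟪m, u⟫ = 0 := hp₁ m hm1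
  by_contra hcon
  push_neg at hcon
  obtain ⟨k12, k13, k23⟩ := hcon
  -- extract bad points
  have get : ∀ (Sa Sb : Set E3), (∀ x ∈ Sa, ⟪x, u⟫ = 0) → m ∈ Sa → m ∈ Sb →
      ¬ IsMin2 e₀ e₁ (Sa ∩ Sb) m → ∃ p, p ∈ Sa ∧ p ∈ Sb ∧ lt2 e₀ e₁ p m := by
    intro Sa Sb hpl hma hmb hnot
    rw [IsMin2] at hnot
    push_neg at hnot
    obtain ⟨x, hx, hx1, hx2⟩ := hnot ⟨hma, hmb⟩
    rcases lt2_total e₀ e₁ u inj (hpl x hx.1) (hpl m hma) with h | h | h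
    · exact absurd h hx1
    · exact ⟨x, hx.1, hx.2, h⟩
    · exact absurd h hx2
  obtain ⟨p12, hp12a, hp12b, hl12⟩ := get C₁ C₂ hp₁ hm1 hm2 k12
  obtain ⟨p13, hp13a, hp13b, hl13⟩ := get C₁ C₃ hp₁ hm1 hm3 k13
  obtain ⟨p23, hp23a, hp23b, hl23⟩ := get C₂ C₃ hp₂ hm2 hm3 k23
  have n12 : Neg2 e₀ e₁ (p12 - m) := lt2_iff_neg2.mp hl12
  have n13 : Neg2 e₀ e₁ (p13 - m) := lt2_iff_neg2.mp hl13
  have n23 : Neg2 e₀ e₁ (p23 - m) := lt2_iff_neg2.mp hl23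
  have w12 : ⟪p12 - m, u⟫ = 0 := by rw [inner_sub_left, hp₁ p12 hp12a, hmu]; ring
  have w13 : ⟪p13 - m, u⟫ = 0 := by rw [inner_sub_left, hp₁ p13 hp13a, hmu]; ring
  have w23 : ⟪p23 - m, u⟫ = 0 := by rw [inner_sub_left, hp₂ p23 hp23a, hmu]; ring
  -- the middle one gives a contradiction
  have finish : ∀ (w : E3) (v : E3), Neg2 e₀ e₁ v → w ∈ C₁ → w ∈ C₂ → w ∈ C₃ →
      (∃ c : ℝ, 0 < c ∧ w - m = c • v) → False := by
    rintro w v hv hw1 hw2 hw3 ⟨c, hc, hwc⟩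
    rcases hmmin w ⟨⟨hw1, hw2⟩, hw3⟩ with h | h
    · apply neg2_not_zero (e₀ := e₀) (e₁ := e₁)
      have : w - m = 0 := by rw [h]; abel
      rw [this] at hwc
      have hv0 : v = 0 := by
        have := hwc.symm
        rwa [smul_eq_zero_iff_right (ne_of_gt hc)] at this
      rwa [hv0] at hv
    · refine lt2_asymm h ?_
      rw [lt2_iff_neg2]
      rw [hwc]
      exact neg2_smul hc hv
  obtain ⟨lam, mu, hlam, hmu', hcase⟩ :=
    combo e₀ e₁ u inj w12 w13 w23 n12 n13 n23
  rcases hcase with he | he | he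
  ·
    -- v₁ = p12-m : segment in C₁∩C₂; others p13-m, p23-m: both endpoints in C₃
    obtain ⟨w, hw1, hw2, hw3, hwe⟩ := build hc₁ hc₂ hc₃ hm1 hm2 hm3
      hp12a hp12b hp13b hp23b hlam hmu' he
    exact finish w (p12 - m) n12 hw1 hw2 hw3
      ⟨1 / (1 + lam + mu), by positivity, hwe⟩
  · -- p13 - m = lam•(p12-m) + mu•(p23-m); pair {1,3}; extra points p12,p23 ∈ C₂
    obtain ⟨w, hw1, hw3, hw2, hwe⟩ := build hc₁ hc₃ hc₂ hm1 hm3 hm2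
      hp13a hp13b hp12b hp23a hlam hmu' he
    exact finish w (p13 - m) n13 hw1 hw2 hw3
      ⟨1 / (1 + lam + mu), by positivity, hwe⟩
  · -- p23 - m = lam•(p12-m) + mu•(p13-m); pair {2,3}; extras ∈ C₁
    obtain ⟨w, hw2, hw3, hw1, hwe⟩ := build hc₂ hc₃ hc₁ hm2 hm3 hm1
      hp23a hp23b hp12a hp13a hlam hmu' he
    exact finish w (p23 - m) n23 hw1 hw2 hw3
      ⟨1 / (1 + lam + mu), by positivity, hwe⟩

lemma exists_basis_pair (u : E3) (hu : ‖u‖ = 1) :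
    ∃ e₀ e₁ : E3, ∀ v : E3, ⟪v, u⟫ = 0 → ⟪v, e₀⟫ = 0 → ⟪v, e₁⟫ = 0 → v = 0 := by
  have hu0 : u ≠ 0 := by
    intro h; rw [h] at hu; simp at hu
  haveI : Fact (Module.finrank ℝ E3 = 2 + 1) := ⟨by simp⟩
  set W : Submodule ℝ E3 := (Submodule.span ℝ {u})ᗮ with hW
  have hrank : Module.finrank ℝ ↥W = 2 := Submodule.finrank_orthogonal_span_singleton hu0
  let b : OrthonormalBasis (Fin 2) ℝ ↥W :=
    (stdOrthonormalBasis ℝ ↥W).reindex (finCongr hrank)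
  refine ⟨(b 0 : E3), (b 1 : E3), fun v hvu h0 h1 => ?_⟩
  have hvW : v ∈ W := by
    rw [hW, Submodule.mem_orthogonal]
    intro x hx
    rw [Submodule.mem_span_singleton] at hx
    obtain ⟨c, rfl⟩ := hx
    rw [real_inner_smul_left, real_inner_comm, hvu, mul_zero]
  set vv : ↥W := ⟨v, hvW⟩ with hvv
  have : b.repr vv = 0 := by
    ext i
    rw [b.repr_apply_apply]
    fin_cases i
    · rw [Submodule.coe_inner, real_inner_comm]
      exact h0
    · rw [Submodule.coe_inner, real_inner_comm]
      exact h1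
  have : vv = 0 := by
    have := congrArg b.repr.symm this
    simpa using this
  have : (vv : E3) = 0 := by rw [this]; rfl
  exact this

lemma arith_chain {bm n' t fib c2 c3 s : ℝ} (hbm1 : bm ≤ 1) (hbm0 : 0 < bm)
    (hn : 3 ≤ n') (hch : c3 * 3 = c2 * (n' - 2)) (hc2 : 0 < c2)
    (hT : bm * c3 ≤ t) (hfib : t / c2 ≤ fib) (hfs : fib + 2 ≤ s) :
    bm / 3 * n' ≤ s := by
  have h1 : bm * (n' - 2) / 3 ≤ t / c2 := by
    rw [div_le_div_iff₀ (by norm_num) hc2]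
    calc bm * (n' - 2) * c2 = bm * (c3 * 3) := by rw [hch]; ring
      _ ≤ t * 3 := by nlinarith
  have h3 : bm / 3 * n' ≤ bm * (n' - 2) / 3 + 2 := by nlinarith
  linarith



/-- If a `β` fraction of the triples of a pairwise intersecting finite family of
convex sets in ℝ³ have projections (onto a plane with unit normal `u`) with a
common point, then some line meets an `α(β)` fraction of the family. -/
theorem fractional_triples_implies_line_transversal (β : ℝ) (hβ : 0 < β) :
    ∃ α : ℝ, 0 < α ∧
      ∀ F : Finset (Set (EuclideanSpace ℝ (Fin 3))),
        (∀ A ∈ F, Convex ℝ A) →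
        (∀ A ∈ F, ∀ B ∈ F, (A ∩ B).Nonempty) →
        ∀ u : EuclideanSpace ℝ (Fin 3), ‖u‖ = 1 →
        ∀ T ⊆ F.powersetCard 3,
          β * ((F.powersetCard 3).card : ℝ) ≤ T.card →
          (∀ t ∈ T, (⋂ A ∈ t, (fun x => x - ⟪x, u⟫ • u) '' A).Nonempty) →
          ∃ ℓ : Set (EuclideanSpace ℝ (Fin 3)),
            (∃ p w : EuclideanSpace ℝ (Fin 3), w ≠ 0 ∧
              ℓ = {x : EuclideanSpace ℝ (Fin 3) | ∃ t : ℝ, x = p + t • w}) ∧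
            ∃ S ⊆ F, α * (F.card : ℝ) ≤ S.card ∧ ∀ A ∈ S, (ℓ ∩ A).Nonempty := by
  classical
  have hβm0 : 0 < min β 1 := lt_min hβ one_pos
  refine ⟨min β 1 / 3, by positivity, ?_⟩
  intro F hconv hpair u hu T hTsub hTcard hTint
  have hu0 : u ≠ 0 := by intro h; rw [h] at hu; simp at hu
  set βm := min β 1 with hβmdef
  have hβm1 : βm ≤ 1 := min_le_right β 1
  by_cases hF3 : F.card < 3
  · -- small case
    rcases Finset.eq_empty_or_nonempty F with rfl | ⟨A, hA⟩
    · refine ⟨{x | ∃ t : ℝ, x = 0 + t • u}, ⟨0, u, hu0, rfl⟩, ∅, by simp, by simp, by simp⟩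
    · obtain ⟨a, ha⟩ := hpair A hA A hA
      have haA : a ∈ A := ha.1
      refine ⟨{x | ∃ t : ℝ, x = a + t • u}, ⟨a, u, hu0, rfl⟩, {A},
        by simpa using hA, ?_, ?_⟩
      · have h2 : (F.card : ℝ) ≤ 2 := by exact_mod_cast Nat.lt_succ_iff.mp hF3
        have : βm / 3 * (F.card : ℝ) ≤ 1 := by nlinarith
        simpa using this
      · intro B hB
        rw [Finset.mem_singleton] at hB
        subst hB
        exact ⟨a, ⟨0, by simp⟩, haA⟩
  · -- main case
    push_neg at hF3
    obtain ⟨e₀, e₁, inj⟩ := exists_basis_pair u hu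
    set proj : E3 → E3 := fun x => x - ⟪x, u⟫ • u with hprojdef
    have huu : ⟪u, u⟫ = 1 := by
      rw [real_inner_self_eq_norm_mul_norm, hu]; norm_num
    have hprojplane : ∀ x, ⟪proj x, u⟫ = 0 := by
      intro x
      show ⟪x - ⟪x, u⟫ • u, u⟫ = 0
      rw [inner_sub_left, real_inner_smul_left, huu]
      ring
    let projL : E3 →ₗ[ℝ] E3 :=
      { toFun := fun x => x - ⟪x, u⟫ • u
        map_add' := by
          intro x y
          show (x + y) - ⟪x + y, u⟫ • u = (x - ⟪x, u⟫ • u) + (y - ⟪y, u⟫ • u)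
          rw [inner_add_left, add_smul]
          abel
        map_smul' := by
          intro c x
          show (c • x) - ⟪c • x, u⟫ • u = c • (x - ⟪x, u⟫ • u)
          rw [real_inner_smul_left, smul_sub, smul_smul] }
    have hProjConv : ∀ A : Set E3, Convex ℝ A → Convex ℝ (proj '' A) := by
      intro A hA
      exact hA.linear_image projL
    -- witness points
    have hptE : ∀ t : Finset (Set E3), ∃ p : E3, t ∈ T → p ∈ ⋂ A ∈ t, proj '' A := by
      intro t
      by_cases ht : t ∈ T
      · obtain ⟨p, hp⟩ := hTint t ht
        exact ⟨p, fun _ => hp⟩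
      · exact ⟨0, fun h => absurd h ht⟩
    choose pt hpt using hptE
    set P : Set E3 → Set E3 :=
      fun A => convexHull ℝ (((T.filter (fun t => A ∈ t)).image pt : Finset E3) : Set E3)
      with hPdef
    have hPconv : ∀ A, Convex ℝ (P A) := fun A => convex_convexHull ℝ _
    have hPcomp : ∀ A, IsCompact (P A) := fun A =>
      (Finset.finite_toSet _).isCompact_convexHull ℝ
    have hPsub : ∀ A ∈ F, P A ⊆ proj '' A := by
      intro A hA
      apply convexHull_min _ (hProjConv A (hconv A hA))
      intro x hx
      simp only [Finset.coe_image, Set.mem_image, Finset.mem_coe, Finset.mem_filter] at hx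
      obtain ⟨t, ⟨htT, hAt⟩, rfl⟩ := hx
      have := hpt t htT
      simp only [Set.mem_iInter] at this
      exact this A hAt
    have hPplane : ∀ A ∈ F, ∀ x ∈ P A, ⟪x, u⟫ = 0 := by
      intro A hA x hx
      obtain ⟨a, _, rfl⟩ := hPsub A hA hx
      exact hprojplane a
    have hPmem : ∀ σ ∈ T, ∀ A ∈ σ, pt σ ∈ P A := by
      intro σ hσ A hA
      apply subset_convexHull
      simp only [Finset.coe_image, Set.mem_image, Finset.mem_coe, Finset.mem_filter]
      exact ⟨σ, ⟨hσ, hA⟩, rfl⟩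
    -- choose for each triple a pair and its min
    have hΨ : ∀ σ : Finset (Set E3), ∃ (τ : Finset (Set E3)) (m : E3), σ ∈ T →
        τ ⊆ σ ∧ τ.card = 2 ∧ m ∈ (⋂ A ∈ σ, P A) ∧ IsMin2 e₀ e₁ (⋂ A ∈ τ, P A) m := by
      intro σ
      by_cases hσ : σ ∈ T
      · have hσF := Finset.mem_powersetCard.mp (hTsub hσ)
        obtain ⟨hσsub, hσcard⟩ := hσF
        obtain ⟨A, B, C, hAB, hAC, hBC, rfl⟩ := Finset.card_eq_three.mp hσcard
        have hAF : A ∈ F := hσsub (by simp)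
        have hBF : B ∈ F := hσsub (by simp)
        have hCF : C ∈ F := hσsub (by simp)
        have hiInter : (⋂ X ∈ ({A, B, C} : Finset (Set E3)), P X) = P A ∩ P B ∩ P C := by
          simp [Finset.set_biInter_insert, Set.inter_assoc]
        have hScomp : IsCompact (P A ∩ P B ∩ P C) :=
          ((hPcomp A).inter_right (hPcomp B).isClosed).inter_right (hPcomp C).isClosed
        have hSne : (P A ∩ P B ∩ P C).Nonempty := by
          refine ⟨pt {A, B, C}, ⟨⟨?_, ?_⟩, ?_⟩⟩ <;>
            exact hPmem _ hσ _ (by simp)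
        have hSpl : ∀ x ∈ P A ∩ P B ∩ P C, ⟪x, u⟫ = 0 := by
          intro x hx
          exact hPplane A hAF x hx.1.1
        obtain ⟨m, hm⟩ := exists_isMin2 e₀ e₁ u inj hScomp hSne hSpl
        have hmσ : m ∈ ⋂ X ∈ ({A, B, C} : Finset (Set E3)), P X := by
          rw [hiInter]; exact hm.1
        rcases key e₀ e₁ u inj (hPconv A) (hPconv B) (hPconv C)
          (fun x hx => hPplane A hAF x hx) (fun x hx => hPplane B hBF x hx)
          (fun x hx => hPplane C hCF x hx) hm with hk | hk | hk
        · refine ⟨{A, B}, m, fun _ => ⟨?_, ?_, hmσ, ?_⟩⟩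
          · intro x hx; simp at hx; rcases hx with rfl | rfl <;> simp
          · simp [hAB]
          · have : (⋂ X ∈ ({A, B} : Finset (Set E3)), P X) = P A ∩ P B := by
              simp [Finset.set_biInter_insert]
            rw [this]; exact hk
        · refine ⟨{A, C}, m, fun _ => ⟨?_, ?_, hmσ, ?_⟩⟩
          · intro x hx; simp at hx; rcases hx with rfl | rfl <;> simp
          · simp [hAC]
          · have : (⋂ X ∈ ({A, C} : Finset (Set E3)), P X) = P A ∩ P C := by
              simp [Finset.set_biInter_insert]
            rw [this]; exact hk
        · refine ⟨{B, C}, m, fun _ => ⟨?_, ?_, hmσ, ?_⟩⟩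
          · intro x hx; simp at hx; rcases hx with rfl | rfl <;> simp
          · simp [hBC]
          · have : (⋂ X ∈ ({B, C} : Finset (Set E3)), P X) = P B ∩ P C := by
              simp [Finset.set_biInter_insert]
            rw [this]; exact hk
      · exact ⟨∅, 0, fun h => absurd h hσ⟩
    choose Φ M hΦM using hΨ
    set pairs := F.powersetCard 2 with hpairsdef
    have hmaps : ∀ σ ∈ T, Φ σ ∈ pairs := by
      intro σ hσ
      obtain ⟨h1, h2, _, _⟩ := hΦM σ hσ
      have hσF := Finset.mem_powersetCard.mp (hTsub hσ)
      exact Finset.mem_powersetCard.mpr ⟨h1.trans hσF.1, h2⟩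
    set n := F.card with hndef
    have c2pos : 0 < n.choose 2 := Nat.choose_pos (by omega)
    have c3pos : 0 < n.choose 3 := Nat.choose_pos (by omega)
    have c2posR : (0:ℝ) < (n.choose 2 : ℝ) := by exact_mod_cast c2pos
    have hT : βm * (n.choose 3 : ℝ) ≤ T.card := by
      calc βm * (n.choose 3 : ℝ) ≤ β * (n.choose 3 : ℝ) := by
            apply mul_le_mul_of_nonneg_right (min_le_left β 1) (by positivity)
        _ ≤ T.card := by
            rw [← Finset.card_powersetCard 3 F] at *
            exact hTcard
    have hTposR : (0:ℝ) < T.card := by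
      have : (0:ℝ) < βm * (n.choose 3 : ℝ) := by positivity
      linarith
    -- pigeonhole
    have hsum := Finset.card_eq_sum_card_fiberwise hmaps
    have hpairs_ne : pairs.Nonempty := by
      rw [← Finset.card_pos, hpairsdef, Finset.card_powersetCard]
      exact c2pos
    have hex : ∃ τ ∈ pairs,
        (T.card : ℝ) / (n.choose 2 : ℝ) ≤ ((T.filter (fun σ => Φ σ = τ)).card : ℝ) := by
      apply Finset.exists_le_of_sum_le hpairs_ne
      have h1 : ∑ τ ∈ pairs, (T.card : ℝ) / (n.choose 2 : ℝ) = T.card := by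
        rw [Finset.sum_const, hpairsdef, Finset.card_powersetCard, nsmul_eq_mul]
        field_simp
        rfl
      have h2 : ∑ τ ∈ pairs, ((T.filter (fun σ => Φ σ = τ)).card : ℝ) = T.card := by
        rw [← Nat.cast_sum]
        exact_mod_cast congrArg Nat.cast hsum.symm
      rw [h1, h2]
    obtain ⟨τ0, hτ0pairs, hτ0⟩ := hex
    set fiber := T.filter (fun σ => Φ σ = τ0) with hfibdef
    have hfibposR : (0:ℝ) < fiber.card := by
      have : (0:ℝ) < (T.card : ℝ) / (n.choose 2 : ℝ) := by positivity
      linarith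
    have hfibne : fiber.Nonempty := by
      rw [← Finset.card_pos]
      exact_mod_cast hfibposR
    obtain ⟨σs, hσs⟩ := hfibne
    have hσsT : σs ∈ T := (Finset.mem_filter.mp hσs).1
    have hσsΦ : Φ σs = τ0 := (Finset.mem_filter.mp hσs).2
    set q := M σs with hqdef
    have hqmin : IsMin2 e₀ e₁ (⋂ A ∈ τ0, P A) q := by
      have := (hΦM σs hσsT).2.2.2
      rwa [hσsΦ] at this
    have hMeq : ∀ σ ∈ fiber, M σ = q := by
      intro σ hσ
      have hσT : σ ∈ T := (Finset.mem_filter.mp hσ).1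
      have hσΦ : Φ σ = τ0 := (Finset.mem_filter.mp hσ).2
      have hmin2 : IsMin2 e₀ e₁ (⋂ A ∈ τ0, P A) (M σ) := by
        have := (hΦM σ hσT).2.2.2
        rwa [hσΦ] at this
      rcases hqmin.2 (M σ) hmin2.1 with h | h
      · exact h
      · rcases hmin2.2 q hqmin.1 with h' | h'
        · exact h'.symm
        · exact absurd h' (fun hh => lt2_asymm h hh)
    have hqP : ∀ σ ∈ fiber, ∀ A ∈ σ, q ∈ P A := by
      intro σ hσ A hA
      have hσT : σ ∈ T := (Finset.mem_filter.mp hσ).1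
      have := (hΦM σ hσT).2.2.1
      rw [hMeq σ hσ] at this
      simp only [Set.mem_iInter] at this
      exact this A hA
    set S₀ := F.filter (fun A => q ∈ proj '' A) with hS0def
    have hS0mem : ∀ σ ∈ fiber, ∀ A ∈ σ, A ∈ S₀ := by
      intro σ hσ A hA
      have hσT : σ ∈ T := (Finset.mem_filter.mp hσ).1
      have hAF : A ∈ F := (Finset.mem_powersetCard.mp (hTsub hσT)).1 hA
      exact Finset.mem_filter.mpr ⟨hAF, hPsub A hAF (hqP σ hσ A hA)⟩
    have hτ0card : τ0.card = 2 := (Finset.mem_powersetCard.mp hτ0pairs).2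
    have hτ0sub : ∀ σ ∈ fiber, τ0 ⊆ σ := by
      intro σ hσ
      have hσT : σ ∈ T := (Finset.mem_filter.mp hσ).1
      have hσΦ : Φ σ = τ0 := (Finset.mem_filter.mp hσ).2
      have := (hΦM σ hσT).1
      rwa [hσΦ] at this
    have hτ0S0 : τ0 ⊆ S₀ := fun A hA => hS0mem σs hσs A (hτ0sub σs hσs hA)
    -- injection from fiber into S₀ \ τ0
    set g : Finset (Set E3) → Set E3 :=
      fun σ => if h : ∃ a, σ \ τ0 = {a} then h.choose else ∅ with hgdef
    have hgspec : ∀ σ ∈ fiber, σ \ τ0 = {g σ} := by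
      intro σ hσ
      have hσT : σ ∈ T := (Finset.mem_filter.mp hσ).1
      have hσcard : σ.card = 3 := (Finset.mem_powersetCard.mp (hTsub hσT)).2
      have hcard1 : (σ \ τ0).card = 1 := by
        rw [Finset.card_sdiff_of_subset (hτ0sub σ hσ), hσcard, hτ0card]
      have hone : ∃ a, σ \ τ0 = {a} := Finset.card_eq_one.mp hcard1
      rw [hgdef]
      simp only [dif_pos hone]
      exact hone.choose_spec
    have hgmem : ∀ σ ∈ fiber, g σ ∈ S₀ \ τ0 := by
      intro σ hσ
      have h1 : g σ ∈ σ \ τ0 := by rw [hgspec σ hσ]; simp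
      rw [Finset.mem_sdiff] at h1 ⊢
      exact ⟨hS0mem σ hσ _ h1.1, h1.2⟩
    have hginj : Set.InjOn g fiber := by
      intro σ hσ σ' hσ' heq
      have h1 : τ0 ∪ σ \ τ0 = σ := Finset.union_sdiff_of_subset (hτ0sub σ hσ)
      have h2 : τ0 ∪ σ' \ τ0 = σ' := Finset.union_sdiff_of_subset (hτ0sub σ' hσ')
      rw [← h1, ← h2, hgspec σ hσ, hgspec σ' hσ', heq]
    have hcard1 : fiber.card ≤ (S₀ \ τ0).card :=
      Finset.card_le_card_of_injOn g hgmem hginj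
    have hcard2 : (S₀ \ τ0).card + 2 = S₀.card := by
      rw [← hτ0card]
      exact Finset.card_sdiff_add_card_eq_card hτ0S0
    have hfibcard : (fiber.card : ℝ) + 2 ≤ (S₀.card : ℝ) := by
      have : fiber.card + 2 ≤ S₀.card := by omega
      exact_mod_cast this
    -- the real-number chain
    have hchoose : (n.choose 3 : ℝ) * 3 = (n.choose 2 : ℝ) * ((n : ℝ) - 2) := by
      have h := Nat.choose_succ_right_eq n 2
      have h2 : ((n : ℝ) - 2) = ((n - 2 : ℕ) : ℝ) := by
        rw [Nat.cast_sub (by omega)]; norm_num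
      rw [h2]
      exact_mod_cast h
    have hn3R : (3:ℝ) ≤ (n:ℝ) := by exact_mod_cast hF3
    have hchain : βm / 3 * (n : ℝ) ≤ (S₀.card : ℝ) :=
      arith_chain hβm1 hβm0 hn3R hchoose c2posR hT hτ0 hfibcard
    -- conclusion
    refine ⟨{x | ∃ t : ℝ, x = q + t • u}, ⟨q, u, hu0, rfl⟩, S₀,
      Finset.filter_subset _ _, hchain, ?_⟩
    intro A hA
    obtain ⟨-, hqA⟩ := Finset.mem_filter.mp hA
    obtain ⟨a, haA, hqa⟩ := hqA
    refine ⟨a, ⟨⟪a, u⟫, ?_⟩, haA⟩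
    rw [← hqa]
    show a = (a - ⟪a, u⟫ • u) + ⟪a, u⟫ • u
    abel
end

section
/- Let K be a nonempty compact convex set in ℝ² of width 0 (i.e., a segment with endpoints x and y, possibly x = y), and let S be a closed slab of positive width with S ∩ K ≠ ∅ and S \ K connected. Then S contains x or S contains y. -/
open scoped RealInnerProductSpace

set_option maxHeartbeats 1000000

private lemma convex_lt (X Y a b c : ℝ) (hb : 0 ≤ b) (hc : 0 ≤ c) (hbc : b + c = 1)
    (hX : X < a) (hY : Y < a) : b * X + c * Y < a := by
  have ha : b * a + c * a = a := by rw [← add_mul, hbc, one_mul]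
  rcases hb.lt_or_eq with h | h
  · nlinarith [mul_lt_mul_of_pos_left hX h, mul_le_mul_of_nonneg_left hY.le hc]
  · have hc1 : c = 1 := by linarith
    rw [← h, hc1]; simpa using hY

private lemma convex_gt (X Y a b c : ℝ) (hb : 0 ≤ b) (hc : 0 ≤ c) (hbc : b + c = 1)
    (hX : a < X) (hY : a < Y) : a < b * X + c * Y := by
  have ha : b * a + c * a = a := by rw [← add_mul, hbc, one_mul]
  rcases hb.lt_or_eq with h | h
  · nlinarith [mul_lt_mul_of_pos_left hX h, mul_le_mul_of_nonneg_left hY.le hc]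
  · have hc1 : c = 1 := by linarith
    rw [← h, hc1]; simpa using hY

private lemma slab_aux (x y u : EuclideanSpace ℝ (Fin 2)) (a w : ℝ) (hw : 0 < w)
    (hx : ⟪x, u⟫ < a) (hy : a + w < ⟪y, u⟫)
    (hconn : IsPreconnected
      ({p : EuclideanSpace ℝ (Fin 2) | a ≤ ⟪p, u⟫ ∧ ⟪p, u⟫ ≤ a + w} \ segment ℝ x y)) :
    False := by
  set s : Set (EuclideanSpace ℝ (Fin 2)) :=
    {p : EuclideanSpace ℝ (Fin 2) | a ≤ ⟪p, u⟫ ∧ ⟪p, u⟫ ≤ a + w} \ segment ℝ x y with hs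
  set n : EuclideanSpace ℝ (Fin 2) := !₂[x 1 - y 1, y 0 - x 0] with hn
  have hinner : ∀ p q : EuclideanSpace ℝ (Fin 2), ⟪p, q⟫ = p 0 * q 0 + p 1 * q 1 := by
    intro p q
    simp [PiLp.inner_apply, Fin.sum_univ_two, RCLike.inner_apply, conj_trivial]; ring
  have hn0 : n 0 = x 1 - y 1 := rfl
  have hn1 : n 1 = y 0 - x 0 := rfl
  have hD : 0 < ⟪y, u⟫ - ⟪x, u⟫ := by linarith
  have hxy : x ≠ y := by
    intro h; rw [h] at hx; linarith
  have hd : 0 < (y 0 - x 0) ^ 2 + (y 1 - x 1) ^ 2 := by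
    rcases lt_or_eq_of_le (by positivity : (0:ℝ) ≤ (y 0 - x 0) ^ 2 + (y 1 - x 1) ^ 2) with h | h
    · exact h
    · exfalso; apply hxy
      have h0 : y 0 = x 0 := by nlinarith [sq_nonneg (y 0 - x 0), sq_nonneg (y 1 - x 1)]
      have h1 : y 1 = x 1 := by nlinarith [sq_nonneg (y 0 - x 0), sq_nonneg (y 1 - x 1)]
      ext i; fin_cases i <;> simp [h0, h1]
  have hyn : ⟪y, n⟫ = ⟪x, n⟫ := by rw [hinner, hinner, hn0, hn1]; ring
  have hnn : ⟪n, n⟫ = (y 0 - x 0) ^ 2 + (y 1 - x 1) ^ 2 := by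
    rw [hinner, hn0, hn1]; ring
  have hseg : ∀ p ∈ segment ℝ x y, ⟪p, n⟫ = ⟪x, n⟫ := by
    rintro p ⟨b, c, hb, hc, hbc, rfl⟩
    rw [inner_add_left, real_inner_smul_left, real_inner_smul_left, hyn, ← add_mul, hbc, one_mul]
  have hline : ∀ p : EuclideanSpace ℝ (Fin 2), ⟪p, n⟫ = ⟪x, n⟫ →
      a ≤ ⟪p, u⟫ → ⟪p, u⟫ ≤ a + w → p ∈ segment ℝ x y := by
    intro p hpn hpa hpw
    have hrel : (p 0 - x 0) * (y 1 - x 1) = (p 1 - x 1) * (y 0 - x 0) := by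
      rw [hinner, hinner, hn0, hn1] at hpn; nlinarith [hpn]
    set t : ℝ := ((p 0 - x 0) * (y 0 - x 0) + (p 1 - x 1) * (y 1 - x 1)) /
      ((y 0 - x 0) ^ 2 + (y 1 - x 1) ^ 2) with ht
    have hp : p = x + t • (y - x) := by
      ext i
      fin_cases i
      · show p 0 = x 0 + t * (y 0 - x 0)
        rw [ht]
        field_simp
        linear_combination (y 1 - x 1) * hrel
      · show p 1 = x 1 + t * (y 1 - x 1)
        rw [ht]
        field_simp
        linear_combination (-(y 0 - x 0)) * hrel
    have hpu : ⟪p, u⟫ = ⟪x, u⟫ + t * (⟪y, u⟫ - ⟪x, u⟫) := by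
      rw [hp, inner_add_left, real_inner_smul_left, inner_sub_left]
    have ht0 : 0 ≤ t := by nlinarith [hpu, hD]
    have ht1 : t ≤ 1 := by nlinarith [hpu, hD]
    rw [hp]
    exact ⟨1 - t, t, by linarith, ht0, by ring, by module⟩
  set U : Set (EuclideanSpace ℝ (Fin 2)) := {p | ⟪x, n⟫ < ⟪p, n⟫} with hU
  set V : Set (EuclideanSpace ℝ (Fin 2)) := {p | ⟪p, n⟫ < ⟪x, n⟫} with hV
  have hcont : Continuous fun p : EuclideanSpace ℝ (Fin 2) => ⟪p, n⟫ :=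
    continuous_id.inner continuous_const
  have hUo : IsOpen U := isOpen_lt continuous_const hcont
  have hVo : IsOpen V := isOpen_lt hcont continuous_const
  have hcover : s ⊆ U ∪ V := by
    rintro p ⟨⟨hpa, hpw⟩, hps⟩
    rcases lt_trichotomy ⟪p, n⟫ ⟪x, n⟫ with h | h | h
    · exact Or.inr h
    · exact absurd (hline p h hpa hpw) hps
    · exact Or.inl h
  set t0 : ℝ := (a + w / 2 - ⟪x, u⟫) / (⟪y, u⟫ - ⟪x, u⟫) with ht0
  set p0 : EuclideanSpace ℝ (Fin 2) := x + t0 • (y - x) with hp0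
  have hp0u : ⟪p0, u⟫ = a + w / 2 := by
    rw [hp0, inner_add_left, real_inner_smul_left, inner_sub_left, ht0,
      div_mul_cancel₀ _ (ne_of_gt hD)]
    ring
  have hp0n : ⟪p0, n⟫ = ⟪x, n⟫ := by
    rw [hp0, inner_add_left, real_inner_smul_left, inner_sub_left, hyn]; ring
  set ε : ℝ := w / (2 * (|⟪n, u⟫| + 1)) with hε
  have hεpos : 0 < ε := by positivity
  have hεsmall : ε * |⟪n, u⟫| < w / 2 := by
    rw [hε, div_mul_eq_mul_div, div_lt_iff₀ (by positivity)]
    nlinarith [abs_nonneg ⟪n, u⟫, hw]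
  have hmem : ∀ σ : ℝ, |σ| = 1 → p0 + (σ * ε) • n ∈ s := by
    intro σ hσ
    have h1 : ⟪p0 + (σ * ε) • n, u⟫ = a + w / 2 + σ * ε * ⟪n, u⟫ := by
      rw [inner_add_left, real_inner_smul_left, hp0u]
    have habs : |σ * ε * ⟪n, u⟫| < w / 2 := by
      rw [abs_mul, abs_mul, hσ, one_mul, abs_of_pos hεpos]
      exact hεsmall
    have habs' := abs_lt.mp habs
    have h2 : ⟪p0 + (σ * ε) • n, n⟫ = ⟪x, n⟫ + σ * ε * ⟪n, n⟫ := by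
      rw [inner_add_left, real_inner_smul_left, hp0n]
    refine ⟨⟨by rw [h1]; linarith [habs'.1], by rw [h1]; linarith [habs'.2]⟩, ?_⟩
    intro hmem
    have h3 := hseg _ hmem
    rw [h2] at h3
    have hσε : σ * ε ≠ 0 := by
      intro h
      rcases mul_eq_zero.mp h with h | h
      · rw [h] at hσ; simp at hσ
      · exact hεpos.ne' h
    have h4 : σ * ε * ⟪n, n⟫ = 0 := by linarith
    rcases mul_eq_zero.mp h4 with h | h
    · exact hσε h
    · rw [hnn] at h; linarith
  have hUne : (s ∩ U).Nonempty := by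
    refine ⟨p0 + (1 * ε) • n, hmem 1 (by norm_num), ?_⟩
    show ⟪x, n⟫ < ⟪p0 + (1 * ε) • n, n⟫
    rw [inner_add_left, real_inner_smul_left, hp0n, hnn]
    nlinarith [hεpos, hd]
  have hVne : (s ∩ V).Nonempty := by
    refine ⟨p0 + ((-1) * ε) • n, hmem (-1) (by norm_num), ?_⟩
    show ⟪p0 + ((-1) * ε) • n, n⟫ < ⟪x, n⟫
    rw [inner_add_left, real_inner_smul_left, hp0n, hnn]
    nlinarith [hεpos, hd]
  obtain ⟨p, _, hpU, hpV⟩ := hconn U V hUo hVo hcover hUne hVne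
  have hpU' : ⟪x, n⟫ < ⟪p, n⟫ := hpU
  have hpV' : ⟪p, n⟫ < ⟪x, n⟫ := hpV
  linarith

/-- If `K` is a segment `[x,y]` in the plane and `S` is a closed slab of positive
width with `S ∩ K ≠ ∅` and `S \ K` connected, then `S` contains `x` or `y`. -/
theorem slab_meets_segment_endpoint
    (x y : EuclideanSpace ℝ (Fin 2)) (K : Set (EuclideanSpace ℝ (Fin 2)))
    (hK : K = segment ℝ x y)
    (S : Set (EuclideanSpace ℝ (Fin 2))) (w : ℝ) (hw : 0 < w)
    (hS : ∃ (u : EuclideanSpace ℝ (Fin 2)) (a : ℝ), ‖u‖ = 1 ∧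
      S = {p : EuclideanSpace ℝ (Fin 2) | a ≤ ⟪p, u⟫ ∧ ⟪p, u⟫ ≤ a + w})
    (hSK : (S ∩ K).Nonempty) (hconn : IsPreconnected (S \ K)) :
    x ∈ S ∨ y ∈ S := by
  obtain ⟨u, a, -, rfl⟩ := hS
  subst hK
  by_contra h
  push_neg at h
  obtain ⟨hx, hy⟩ := h
  simp only [Set.mem_setOf_eq, not_and, not_le] at hx hy
  obtain ⟨p, ⟨hpa, hpw⟩, b, c, hb, hc, hbc, rfl⟩ := hSK
  have hpu : ⟪b • x + c • y, u⟫ = b * ⟪x, u⟫ + c * ⟪y, u⟫ := by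
    rw [inner_add_left, real_inner_smul_left, real_inner_smul_left]
  rw [hpu] at hpa hpw
  rcases lt_or_ge ⟪x, u⟫ a with hxa | hxa
  · rcases lt_or_ge (a + w) ⟪y, u⟫ with hyb | hyb
    · exact slab_aux x y u a w hw hxa hyb hconn
    · have hya : ⟪y, u⟫ < a := by
        rcases lt_or_ge ⟪y, u⟫ a with h | h
        · exact h
        · linarith [hy h]
      linarith [convex_lt ⟪x, u⟫ ⟪y, u⟫ a b c hb hc hbc hxa hya]
  · have hxb : a + w < ⟪x, u⟫ := hx hxa
    rcases lt_or_ge ⟪y, u⟫ a with hya | hya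
    · exact slab_aux y x u a w hw hya hxb (by rwa [segment_symm] at hconn)
    · have hyb : a + w < ⟪y, u⟫ := hy hya
      linarith [convex_gt ⟪x, u⟫ ⟪y, u⟫ (a + w) b c hb hc hbc hxb hyb]
end
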